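/- arXiv:1101.3475 — 10 statements merged into one kernel-verified Lean document; each statement's English description precedes it below -/
import Mathlib

section
/- The forward shift is commutative on [t₀,∞) ∩ 𝕋: for all (u,t) ∈ (([t₀,∞) ∩ 𝕋) × ([t₀,∞) ∩ 𝕋)) ∩ D₊ one has (t,u) ∈ D₊ and δ₊(u,t) = δ₊(t,u). -/
/-- The domain of a shift operator `δ` on the time scale `T` with subset `Tstar`
and initial point `t0`: pairs `(s, t)` with `s ∈ [t0, ∞) ∩ T`, `t ∈ Tstar`, and
`δ s t ∈ Tstar`. -/
def SDom (T Tstar : Set ℝ) (t0 : ℝ) (δ : ℝ → ℝ → ℝ) : Set (ℝ × ℝ) :=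
  {p : ℝ × ℝ | p.1 ∈ T ∧ t0 ≤ p.1 ∧ p.2 ∈ Tstar ∧ δ p.1 p.2 ∈ Tstar}

theorem stmt2
    (T Tstar : Set ℝ) (t0 : ℝ) (δm δp : ℝ → ℝ → ℝ)
    (hTne : T.Nonempty) (hTcl : IsClosed T)
    (hTstarne : Tstar.Nonempty) (hTstarsub : Tstar ⊆ T) (ht0 : t0 ∈ Tstar)
    -- (P1) strict monotonicity in the second argument
    (P1m : ∀ T0 t u, (T0, t) ∈ SDom T Tstar t0 δm → (T0, u) ∈ SDom T Tstar t0 δm →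
        T0 ≤ t → t < u → δm T0 t < δm T0 u)
    (P1p : ∀ T0 t u, (T0, t) ∈ SDom T Tstar t0 δp → (T0, u) ∈ SDom T Tstar t0 δp →
        T0 ≤ t → t < u → δp T0 t < δp T0 u)
    -- (P2) monotonicity in the shift size
    (P2m : ∀ T1 T2 u, (T1, u) ∈ SDom T Tstar t0 δm → (T2, u) ∈ SDom T Tstar t0 δm →
        T1 < T2 → δm T2 u < δm T1 u)
    (P2p : ∀ T1 T2 u, (T1, u) ∈ SDom T Tstar t0 δp → (T2, u) ∈ SDom T Tstar t0 δp →
        T1 < T2 → δp T1 u < δp T2 u)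
    -- (P3)
    (P3a : ∀ t, t ∈ T → t0 ≤ t → (t, t0) ∈ SDom T Tstar t0 δp ∧ δp t t0 = t)
    (P3b : ∀ t, t ∈ Tstar → (t0, t) ∈ SDom T Tstar t0 δp ∧ δp t0 t = t)
    -- (P4)
    (P4p : ∀ s t, (s, t) ∈ SDom T Tstar t0 δp →
        (s, δp s t) ∈ SDom T Tstar t0 δm ∧ δm s (δp s t) = t)
    (P4m : ∀ s t, (s, t) ∈ SDom T Tstar t0 δm →
        (s, δm s t) ∈ SDom T Tstar t0 δp ∧ δp s (δm s t) = t)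
    -- (P5)
    (P5p : ∀ s t u, (s, t) ∈ SDom T Tstar t0 δp → (u, δp s t) ∈ SDom T Tstar t0 δm →
        (s, δm u t) ∈ SDom T Tstar t0 δp ∧ δm u (δp s t) = δp s (δm u t))
    (P5m : ∀ s t u, (s, t) ∈ SDom T Tstar t0 δm → (u, δm s t) ∈ SDom T Tstar t0 δp →
        (s, δp u t) ∈ SDom T Tstar t0 δm ∧ δp u (δm s t) = δm s (δp u t))
    :
    ∀ u t, u ∈ T → t0 ≤ u → t ∈ T → t0 ≤ t → (u, t) ∈ SDom T Tstar t0 δp →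
      (t, u) ∈ SDom T Tstar t0 δp ∧ δp u t = δp t u := by
  intro u t hu hut0 ht htt0 hmem
  obtain ⟨h3t, h3te⟩ := P3a t ht htt0
  obtain ⟨h3u, h3ue⟩ := P3a u hu hut0
  obtain ⟨h4, h4e⟩ := P4p t t0 h3t
  rw [h3te] at h4 h4e
  -- h4 : (t, t) ∈ D₋, h4e : δm t t = t0
  obtain ⟨h5, h5e⟩ := P5m t t u h4 (by rw [h4e]; exact h3u)
  -- h5 : (t, δp u t) ∈ D₋, h5e : δp u (δm t t) = δm t (δp u t)
  rw [h4e, h3ue] at h5e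
  -- h5e : u = δm t (δp u t)
  obtain ⟨h6, h6e⟩ := P4m t (δp u t) h5
  rw [← h5e] at h6 h6e
  exact ⟨h6, h6e.symm⟩
end

section
/- Let u, s ∈ [t₀,∞) ∩ 𝕋 and v ∈ 𝕋* be such that (s,v) ∈ D₋ with v ≥ s and (u,s) ∈ D₋ with s ≥ u. Then the pair (δ₋(u,s), δ₋(s,v)) belongs to D₊ and δ₊(δ₋(u,s), δ₋(s,v)) = δ₋(u,v). -/
theorem stmt4
    (T Tstar : Set ℝ) (t0 : ℝ) (δm δp : ℝ → ℝ → ℝ)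
    (hTne : T.Nonempty) (hTcl : IsClosed T)
    (hTstarne : Tstar.Nonempty) (hTstarsub : Tstar ⊆ T) (ht0 : t0 ∈ Tstar)
    -- (P1) strict monotonicity in the second argument
    (P1m : ∀ T0 t u, (T0, t) ∈ SDom T Tstar t0 δm → (T0, u) ∈ SDom T Tstar t0 δm →
        T0 ≤ t → t < u → δm T0 t < δm T0 u)
    (P1p : ∀ T0 t u, (T0, t) ∈ SDom T Tstar t0 δp → (T0, u) ∈ SDom T Tstar t0 δp →
        T0 ≤ t → t < u → δp T0 t < δp T0 u)
    -- (P2) monotonicity in the shift size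
    (P2m : ∀ T1 T2 u, (T1, u) ∈ SDom T Tstar t0 δm → (T2, u) ∈ SDom T Tstar t0 δm →
        T1 < T2 → δm T2 u < δm T1 u)
    (P2p : ∀ T1 T2 u, (T1, u) ∈ SDom T Tstar t0 δp → (T2, u) ∈ SDom T Tstar t0 δp →
        T1 < T2 → δp T1 u < δp T2 u)
    -- (P3)
    (P3a : ∀ t, t ∈ T → t0 ≤ t → (t, t0) ∈ SDom T Tstar t0 δp ∧ δp t t0 = t)
    (P3b : ∀ t, t ∈ Tstar → (t0, t) ∈ SDom T Tstar t0 δp ∧ δp t0 t = t)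
    -- (P4)
    (P4p : ∀ s t, (s, t) ∈ SDom T Tstar t0 δp →
        (s, δp s t) ∈ SDom T Tstar t0 δm ∧ δm s (δp s t) = t)
    (P4m : ∀ s t, (s, t) ∈ SDom T Tstar t0 δm →
        (s, δm s t) ∈ SDom T Tstar t0 δp ∧ δp s (δm s t) = t)
    -- (P5)
    (P5p : ∀ s t u, (s, t) ∈ SDom T Tstar t0 δp → (u, δp s t) ∈ SDom T Tstar t0 δm →
        (s, δm u t) ∈ SDom T Tstar t0 δp ∧ δm u (δp s t) = δp s (δm u t))
    (P5m : ∀ s t u, (s, t) ∈ SDom T Tstar t0 δm → (u, δm s t) ∈ SDom T Tstar t0 δp →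
        (s, δp u t) ∈ SDom T Tstar t0 δm ∧ δp u (δm s t) = δm s (δp u t))
    :
    ∀ u s v, u ∈ T → t0 ≤ u → s ∈ T → t0 ≤ s → v ∈ Tstar →
      (s, v) ∈ SDom T Tstar t0 δm → s ≤ v →
      (u, s) ∈ SDom T Tstar t0 δm → u ≤ s →
      (δm u s, δm s v) ∈ SDom T Tstar t0 δp ∧ δp (δm u s) (δm s v) = δm u v := by
  intro u s v hu hu0 hs hs0 hv hsvD hsv husD hus
  -- diagonal lemma: (x,x) ∈ Dm and δm x x = t0
  have diag : ∀ x, x ∈ T → t0 ≤ x →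
      (x, x) ∈ SDom T Tstar t0 δm ∧ δm x x = t0 := by
    intro x hx hx0
    obtain ⟨hxd, hxe⟩ := P3a x hx hx0
    obtain ⟨hxx, hxxE⟩ := P4p x t0 hxd
    rw [hxe] at hxx hxxE
    exact ⟨hxx, hxxE⟩
  -- key lemma: full square membership and symmetry
  have key : ∀ x w, x ∈ T → t0 ≤ x → w ∈ T → t0 ≤ w →
      (x, δp w x) ∈ SDom T Tstar t0 δm ∧ δm x (δp w x) = w ∧
      (x, w) ∈ SDom T Tstar t0 δp ∧ δp x w = δp w x := by
    intro x w hx hx0 hw hw0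
    obtain ⟨hxx, hxxE⟩ := diag x hx hx0
    obtain ⟨hwd, hwe⟩ := P3a w hw hw0
    have h1 : (w, δm x x) ∈ SDom T Tstar t0 δp := by rw [hxxE]; exact hwd
    obtain ⟨h2, h3⟩ := P5m x x w hxx h1
    rw [hxxE, hwe] at h3
    obtain ⟨h4, h5⟩ := P4m x (δp w x) h2
    rw [← h3] at h4 h5
    exact ⟨h2, h3.symm, h4, h5⟩
  -- a = δm u s, b = δm s v
  have haStar : δm u s ∈ Tstar := husD.2.2.2
  have hbStar : δm s v ∈ Tstar := hsvD.2.2.2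
  have haT : δm u s ∈ T := hTstarsub haStar
  have hbT : δm s v ∈ T := hTstarsub hbStar
  -- t0 ≤ a
  have ha0 : t0 ≤ δm u s := by
    rcases eq_or_lt_of_le hus with h | h
    · rw [← h]; rw [(diag u hu hu0).2]
    · exact le_of_lt ((diag u hu hu0).2 ▸ P1m u u s (diag u hu hu0).1 husD le_rfl h)
  -- t0 ≤ b
  have hb0 : t0 ≤ δm s v := by
    rcases eq_or_lt_of_le hsv with h | h
    · rw [← h]; rw [(diag s hs hs0).2]
    · exact le_of_lt ((diag s hs hs0).2 ▸ P1m s s v (diag s hs hs0).1 hsvD le_rfl h)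
  -- δp s (δm s v) = v
  obtain ⟨hsb, hsbE⟩ := P4m s v hsvD
  -- main application: P5m with s := u, t := s, u := b
  have hbaDp : (δm s v, δm u s) ∈ SDom T Tstar t0 δp :=
    (key (δm s v) (δm u s) hbT hb0 haT ha0).2.2.1
  obtain ⟨hmain, hmainE⟩ := P5m u s (δm s v) husD hbaDp
  -- hmainE : δp (δm s v) (δm u s) = δm u (δp (δm s v) s)
  have hsym1 : δp (δm s v) s = δp s (δm s v) := (key (δm s v) s hbT hb0 hs hs0).2.2.2
  have hsym2 : δp (δm u s) (δm s v) = δp (δm s v) (δm u s) :=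
    (key (δm u s) (δm s v) haT ha0 hbT hb0).2.2.2
  refine ⟨(key (δm u s) (δm s v) haT ha0 hbT hb0).2.2.1, ?_⟩
  rw [hsym2, hmainE, hsym1, hsbE]
end

section
/- A sticky point cannot belong to the interval [t₀,∞) ∩ 𝕋: if t* ∈ 𝕋 with t* ≠ t₀ satisfies δ±(s,t*) = t* for every s ∈ [t₀,∞) ∩ 𝕋 with (s,t*) ∈ D±, then t* ∉ [t₀,∞) ∩ 𝕋. -/
theorem stmt6
    (T : Set ℝ) (t0 : ℝ) (δm δp : ℝ → ℝ → ℝ)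
    (hTne : T.Nonempty) (hTcl : IsClosed T) (ht0 : t0 ∈ T)
    -- (P3)
    (P3a : ∀ t, t ∈ T → t0 ≤ t → (t, t0) ∈ SDom T T t0 δp ∧ δp t t0 = t)
    (P3b : ∀ t, t ∈ T → (t0, t) ∈ SDom T T t0 δp ∧ δp t0 t = t)
    -- (P4)
    (P4p : ∀ s t, (s, t) ∈ SDom T T t0 δp →
        (s, δp s t) ∈ SDom T T t0 δm ∧ δm s (δp s t) = t)
    (P4m : ∀ s t, (s, t) ∈ SDom T T t0 δm →
        (s, δm s t) ∈ SDom T T t0 δp ∧ δp s (δm s t) = t)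
    -- (P5)
    (P5p : ∀ s t u, (s, t) ∈ SDom T T t0 δp → (u, δp s t) ∈ SDom T T t0 δm →
        (s, δm u t) ∈ SDom T T t0 δp ∧ δm u (δp s t) = δp s (δm u t))
    (P5m : ∀ s t u, (s, t) ∈ SDom T T t0 δm → (u, δm s t) ∈ SDom T T t0 δp →
        (s, δp u t) ∈ SDom T T t0 δm ∧ δp u (δm s t) = δm s (δp u t))
    -- tstar is a sticky point
    (tstar : ℝ) (htstar : tstar ∈ T) (hne : tstar ≠ t0)
    (hstickym : ∀ s, s ∈ T → t0 ≤ s → (s, tstar) ∈ SDom T T t0 δm → δm s tstar = tstar)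
    (hstickyp : ∀ s, s ∈ T → t0 ≤ s → (s, tstar) ∈ SDom T T t0 δp → δp s tstar = tstar)
    :
    ¬ (tstar ∈ T ∧ t0 ≤ tstar) := by
  rintro ⟨hT, hle⟩
  obtain ⟨hd, heq⟩ := P3a tstar hT hle
  obtain ⟨hd2, heq2⟩ := P4p tstar t0 hd
  rw [heq] at hd2 heq2
  exact hne ((hstickym tstar hT hle hd2) ▸ heq2)
end

section
/- The delay function commutes with the forward jump operator: δ₋(h, σ(t)) = σ(δ₋(h,t)) for all t ∈ [t₀,∞) ∩ 𝕋. -/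
theorem stmt7
    (T Tstar : Set ℝ) (t0 : ℝ) (δm δp : ℝ → ℝ → ℝ)
    (hTne : T.Nonempty) (hTcl : IsClosed T)
    (hTstarne : Tstar.Nonempty) (hTstarsub : Tstar ⊆ T) (ht0 : t0 ∈ Tstar)
    -- (P1) strict monotonicity in the second argument
    (P1m : ∀ T0 t u, (T0, t) ∈ SDom T Tstar t0 δm → (T0, u) ∈ SDom T Tstar t0 δm →
        T0 ≤ t → t < u → δm T0 t < δm T0 u)
    (P1p : ∀ T0 t u, (T0, t) ∈ SDom T Tstar t0 δp → (T0, u) ∈ SDom T Tstar t0 δp →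
        T0 ≤ t → t < u → δp T0 t < δp T0 u)
    -- (P2) monotonicity in the shift size
    (P2m : ∀ T1 T2 u, (T1, u) ∈ SDom T Tstar t0 δm → (T2, u) ∈ SDom T Tstar t0 δm →
        T1 < T2 → δm T2 u < δm T1 u)
    (P2p : ∀ T1 T2 u, (T1, u) ∈ SDom T Tstar t0 δp → (T2, u) ∈ SDom T Tstar t0 δp →
        T1 < T2 → δp T1 u < δp T2 u)
    -- (P3)
    (P3a : ∀ t, t ∈ T → t0 ≤ t → (t, t0) ∈ SDom T Tstar t0 δp ∧ δp t t0 = t)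
    (P3b : ∀ t, t ∈ Tstar → (t0, t) ∈ SDom T Tstar t0 δp ∧ δp t0 t = t)
    -- (P4)
    (P4p : ∀ s t, (s, t) ∈ SDom T Tstar t0 δp →
        (s, δp s t) ∈ SDom T Tstar t0 δm ∧ δm s (δp s t) = t)
    (P4m : ∀ s t, (s, t) ∈ SDom T Tstar t0 δm →
        (s, δm s t) ∈ SDom T Tstar t0 δp ∧ δp s (δm s t) = t)
    -- (P5)
    (P5p : ∀ s t u, (s, t) ∈ SDom T Tstar t0 δp → (u, δp s t) ∈ SDom T Tstar t0 δm →
        (s, δm u t) ∈ SDom T Tstar t0 δp ∧ δm u (δp s t) = δp s (δm u t))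
    (P5m : ∀ s t u, (s, t) ∈ SDom T Tstar t0 δm → (u, δm s t) ∈ SDom T Tstar t0 δp →
        (s, δp u t) ∈ SDom T Tstar t0 δm ∧ δp u (δm s t) = δm s (δp u t))
    -- the time scale is unbounded above
    (hTub : ∀ r : ℝ, ∃ s ∈ T, r < s)
    -- the forward jump operator
    (σ : ℝ → ℝ) (hσ : ∀ t, σ t = sInf {s | s ∈ T ∧ t < s})
    -- the delay h : h ∈ (t0, ∞) ∩ T and (h, t) ∈ D± for all t ∈ [t0, ∞) ∩ T
    (h : ℝ) (hhT : h ∈ T) (hht0 : t0 < h)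
    (hdom : ∀ t, t ∈ T → t0 ≤ t →
        (h, t) ∈ SDom T Tstar t0 δm ∧ (h, t) ∈ SDom T Tstar t0 δp)
    -- δm h · maps [t0, ∞) ∩ T onto [δm h t0, ∞) ∩ T
    (honto1 : ∀ t, t ∈ T → t0 ≤ t → δm h t ∈ T ∧ δm h t0 ≤ δm h t)
    (honto2 : ∀ y, y ∈ T → δm h t0 ≤ y → ∃ t, t ∈ T ∧ t0 ≤ t ∧ δm h t = y)
    :
    ∀ t, t ∈ T → t0 ≤ t → δm h (σ t) = σ (δm h t) := by
  -- strict monotonicity of δm h on [t0,∞) ∩ T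
  have key : ∀ s, s ∈ T → t0 ≤ s →
      (s, δm h t0) ∈ SDom T Tstar t0 δp ∧ δm h s = δp s (δm h t0) := by
    intro s hsT hs0
    obtain ⟨hdomp, heq⟩ := P3a s hsT hs0
    have hm : (h, δp s t0) ∈ SDom T Tstar t0 δm := by
      rw [heq]; exact (hdom s hsT hs0).1
    obtain ⟨h1, h2⟩ := P5p s t0 h hdomp hm
    rw [heq] at h2
    exact ⟨h1, h2⟩
  have hmono : ∀ x y, x ∈ T → t0 ≤ x → y ∈ T → t0 ≤ y → x < y → δm h x < δm h y := by
    intro x y hxT hx0 hyT hy0 hxy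
    obtain ⟨hx1, hx2⟩ := key x hxT hx0
    obtain ⟨hy1, hy2⟩ := key y hyT hy0
    rw [hx2, hy2]
    exact P2p x y (δm h t0) hx1 hy1 hxy
  have hmono_le : ∀ x y, x ∈ T → t0 ≤ x → y ∈ T → t0 ≤ y → x ≤ y → δm h x ≤ δm h y := by
    intro x y hxT hx0 hyT hy0 hxy
    rcases eq_or_lt_of_le hxy with rfl | hlt
    · exact le_refl _
    · exact le_of_lt (hmono x y hxT hx0 hyT hy0 hlt)
  -- properties of the forward jump operator
  have sigma_facts : ∀ x, x ∈ T → σ x ∈ T ∧ x ≤ σ x ∧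
      (∀ s, s ∈ T → x < s → σ x ≤ s) ∧
      (∀ b, σ x < b → ∃ s, s ∈ T ∧ x < s ∧ s < b) ∧
      (∀ b, (∀ s, s ∈ T → x < s → b ≤ s) → b ≤ σ x) := by
    intro x hxT
    have hne : {s | s ∈ T ∧ x < s}.Nonempty := by
      obtain ⟨s, hs, hlt⟩ := hTub x; exact ⟨s, hs, hlt⟩
    have hbdd : BddBelow {s | s ∈ T ∧ x < s} := ⟨x, fun s hs => le_of_lt hs.2⟩
    rw [hσ x]
    refine ⟨?_, ?_, ?_, ?_, ?_⟩
    · have h1 : sInf {s | s ∈ T ∧ x < s} ∈ closure {s | s ∈ T ∧ x < s} :=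
        csInf_mem_closure hne hbdd
      have h2 : closure {s | s ∈ T ∧ x < s} ⊆ T := by
        have h3 := closure_mono (show {s | s ∈ T ∧ x < s} ⊆ T from fun s hs => hs.1)
        rwa [hTcl.closure_eq] at h3
      exact h2 h1
    · exact le_csInf hne fun s hs => le_of_lt hs.2
    · intro s hsT hlt; exact csInf_le hbdd ⟨hsT, hlt⟩
    · intro b hb
      obtain ⟨s, hs, hsb⟩ := exists_lt_of_csInf_lt hne hb
      exact ⟨s, hs.1, hs.2, hsb⟩
    · intro b hb
      exact le_csInf hne fun s hs => hb s hs.1 hs.2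
  intro t htT ht0t
  obtain ⟨ftT, ft_ge⟩ := honto1 t htT ht0t
  obtain ⟨σtT, σt_ge, σt_lb, σt_ex, -⟩ := sigma_facts t htT
  obtain ⟨ρT, ρ_ge, ρ_lb, -, ρ_glb⟩ := sigma_facts (δm h t) ftT
  have hτ0 : t0 ≤ σ t := le_trans ht0t σt_ge
  obtain ⟨fτT, fτ_ge⟩ := honto1 (σ t) σtT hτ0
  -- reflections of monotonicity
  have reflect_lt : ∀ x y, x ∈ T → t0 ≤ x → y ∈ T → t0 ≤ y →
      δm h x < δm h y → x < y := by
    intro x y hxT hx0 hyT hy0 hlt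
    by_contra hcon
    exact absurd (hmono_le y x hyT hy0 hxT hx0 (not_lt.mp hcon)) (not_le.mpr hlt)
  have reflect_le : ∀ x y, x ∈ T → t0 ≤ x → y ∈ T → t0 ≤ y →
      δm h x ≤ δm h y → x ≤ y := by
    intro x y hxT hx0 hyT hy0 hle
    by_contra hcon
    exact absurd (hmono y x hyT hy0 hxT hx0 (not_le.mp hcon)) (not_lt.mpr hle)
  rcases lt_trichotomy (δm h (σ t)) (σ (δm h t)) with hlt | heq | hgt
  · -- Case B : δm h (σ t) < σ (δm h t)
    exfalso
    rcases eq_or_lt_of_le σt_ge with hσt | hσt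
    · -- σ t = t, t right-dense
      have hfτ : δm h (σ t) = δm h t := by rw [← hσt]
      have hρc : δm h t0 ≤ σ (δm h t) := le_trans ft_ge ρ_ge
      obtain ⟨s, hsT, hs0, hsval⟩ := honto2 (σ (δm h t)) ρT hρc
      have hfts : δm h t < δm h s :=
        calc δm h t = δm h (σ t) := hfτ.symm
          _ < σ (δm h t) := hlt
          _ = δm h s := hsval.symm
      have hts : t < s := reflect_lt t s htT ht0t hsT hs0 hfts
      have hσts : σ t < s := by rw [← hσt]; exact hts
      obtain ⟨s', hs'T, hts', hs's⟩ := σt_ex s hσts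
      have hs'0 : t0 ≤ s' := le_trans ht0t (le_of_lt hts')
      have h1 : δm h t < δm h s' := hmono t s' htT ht0t hs'T hs'0 hts'
      have h2 : σ (δm h t) ≤ δm h s' := ρ_lb (δm h s') (honto1 s' hs'T hs'0).1 h1
      have h3 : δm h s' < δm h s := hmono s' s hs'T hs'0 hsT hs0 hs's
      rw [hsval] at h3
      exact absurd (lt_of_le_of_lt h2 h3) (lt_irrefl _)
    · -- σ t > t
      have h1 : δm h t < δm h (σ t) := hmono t (σ t) htT ht0t σtT hτ0 hσt
      exact absurd (ρ_lb (δm h (σ t)) fτT h1) (not_le.mpr hlt)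
  · exact heq
  · -- Case A : σ (δm h t) < δm h (σ t)
    exfalso
    have hρc : δm h t0 ≤ σ (δm h t) := le_trans ft_ge ρ_ge
    obtain ⟨s, hsT, hs0, hsval⟩ := honto2 (σ (δm h t)) ρT hρc
    have hsτ : s < σ t := by
      refine reflect_lt s (σ t) hsT hs0 σtT hτ0 ?_
      rw [hsval]; exact hgt
    have hst : s ≤ t := by
      by_contra hcon
      exact absurd (σt_lb s hsT (not_le.mp hcon)) (not_le.mpr hsτ)
    have hρft : σ (δm h t) ≤ δm h t := by
      rw [← hsval]; exact hmono_le s t hsT hs0 htT ht0t hst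
    have hρeq : σ (δm h t) = δm h t := le_antisymm hρft ρ_ge
    -- then δm h (σ t) is a lower bound of the set defining σ (δm h t)
    have hlb : δm h (σ t) ≤ σ (δm h t) := by
      refine ρ_glb (δm h (σ t)) ?_
      intro y hyT hy
      have hyc : δm h t0 ≤ y := le_trans ft_ge (le_of_lt hy)
      obtain ⟨u, huT, hu0, huval⟩ := honto2 y hyT hyc
      have htu : t < u := by
        refine reflect_lt t u htT ht0t huT hu0 ?_
        rw [huval]; exact hy
      have hσtu : σ t ≤ u := σt_lb u huT htu
      calc δm h (σ t) ≤ δm h u := hmono_le (σ t) u σtT hτ0 huT hu0 hσtu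
        _ = y := huval
    exact absurd (lt_of_le_of_lt hlb hgt) (lt_irrefl _)
end

section
/- If the interval (t₀,h) ∩ 𝕋 is empty, then σ(δ₋(h,t)) = t for all t ∈ [t₀,∞) ∩ 𝕋; in particular every point of [δ₋(h,t₀),∞) ∩ 𝕋 is right-scattered, i.e. σ(u) > u for all u ∈ [δ₋(h,t₀),∞) ∩ 𝕋. -/
theorem stmt8
    (T Tstar : Set ℝ) (t0 : ℝ) (δm δp : ℝ → ℝ → ℝ)
    (hTne : T.Nonempty) (hTcl : IsClosed T)
    (hTstarne : Tstar.Nonempty) (hTstarsub : Tstar ⊆ T) (ht0 : t0 ∈ Tstar)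
    -- (P1) strict monotonicity in the second argument
    (P1m : ∀ T0 t u, (T0, t) ∈ SDom T Tstar t0 δm → (T0, u) ∈ SDom T Tstar t0 δm →
        T0 ≤ t → t < u → δm T0 t < δm T0 u)
    (P1p : ∀ T0 t u, (T0, t) ∈ SDom T Tstar t0 δp → (T0, u) ∈ SDom T Tstar t0 δp →
        T0 ≤ t → t < u → δp T0 t < δp T0 u)
    -- (P2) monotonicity in the shift size
    (P2m : ∀ T1 T2 u, (T1, u) ∈ SDom T Tstar t0 δm → (T2, u) ∈ SDom T Tstar t0 δm →
        T1 < T2 → δm T2 u < δm T1 u)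
    (P2p : ∀ T1 T2 u, (T1, u) ∈ SDom T Tstar t0 δp → (T2, u) ∈ SDom T Tstar t0 δp →
        T1 < T2 → δp T1 u < δp T2 u)
    -- (P3)
    (P3a : ∀ t, t ∈ T → t0 ≤ t → (t, t0) ∈ SDom T Tstar t0 δp ∧ δp t t0 = t)
    (P3b : ∀ t, t ∈ Tstar → (t0, t) ∈ SDom T Tstar t0 δp ∧ δp t0 t = t)
    -- (P4)
    (P4p : ∀ s t, (s, t) ∈ SDom T Tstar t0 δp →
        (s, δp s t) ∈ SDom T Tstar t0 δm ∧ δm s (δp s t) = t)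
    (P4m : ∀ s t, (s, t) ∈ SDom T Tstar t0 δm →
        (s, δm s t) ∈ SDom T Tstar t0 δp ∧ δp s (δm s t) = t)
    -- (P5)
    (P5p : ∀ s t u, (s, t) ∈ SDom T Tstar t0 δp → (u, δp s t) ∈ SDom T Tstar t0 δm →
        (s, δm u t) ∈ SDom T Tstar t0 δp ∧ δm u (δp s t) = δp s (δm u t))
    (P5m : ∀ s t u, (s, t) ∈ SDom T Tstar t0 δm → (u, δm s t) ∈ SDom T Tstar t0 δp →
        (s, δp u t) ∈ SDom T Tstar t0 δm ∧ δp u (δm s t) = δm s (δp u t))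
    -- the time scale is unbounded above
    (hTub : ∀ r : ℝ, ∃ s ∈ T, r < s)
    -- the forward jump operator
    (σ : ℝ → ℝ) (hσ : ∀ t, σ t = sInf {s | s ∈ T ∧ t < s})
    -- the delay h : h ∈ (t0, ∞) ∩ T and (h, t) ∈ D± for all t ∈ [t0, ∞) ∩ T
    (h : ℝ) (hhT : h ∈ T) (hht0 : t0 < h)
    (hdom : ∀ t, t ∈ T → t0 ≤ t →
        (h, t) ∈ SDom T Tstar t0 δm ∧ (h, t) ∈ SDom T Tstar t0 δp)
    -- δm h · maps [t0, ∞) ∩ T onto [δm h t0, ∞) ∩ T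
    (honto1 : ∀ t, t ∈ T → t0 ≤ t → δm h t ∈ T ∧ δm h t0 ≤ δm h t)
    (honto2 : ∀ y, y ∈ T → δm h t0 ≤ y → ∃ t, t ∈ T ∧ t0 ≤ t ∧ δm h t = y)
    -- the interval (t0, h) ∩ T is empty
    (hgap : ∀ s, s ∈ T → ¬ (t0 < s ∧ s < h))
    :
    (∀ t, t ∈ T → t0 ≤ t → σ (δm h t) = t) ∧
    (∀ u, u ∈ T → δm h t0 ≤ u → u < σ u) := by
  have hF0 : ∀ t, t ∈ T → t0 ≤ t → t ∈ Tstar := fun t ht h0 => ((hdom t ht h0).1).2.2.1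
  have hδmT : ∀ t, t ∈ T → t0 ≤ t → δm h t ∈ T :=
    fun t ht h0 => hTstarsub ((hdom t ht h0).1).2.2.2
  have hF1 : ∀ t, t ∈ T → t0 ≤ t → (t0, t) ∈ SDom T Tstar t0 δm ∧ δm t0 t = t := by
    intro t ht h0
    have hts := hF0 t ht h0
    obtain ⟨hd, he⟩ := P3b t hts
    have h1 := P4p t0 t hd
    rw [he] at h1
    exact h1
  have hF2 : ∀ t, t ∈ T → t0 ≤ t → δm h t < t := by
    intro t ht h0
    have h1 := hF1 t ht h0
    have h2 := P2m t0 h t h1.1 (hdom t ht h0).1 hht0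
    rwa [h1.2] at h2
  have hF3 : δm h h = t0 := by
    obtain ⟨hd, he⟩ := P3a h hhT (le_of_lt hht0)
    have h1 := (P4p h t0 hd).2
    rwa [he] at h1
  have hF4 : ∀ a b, a ∈ T → b ∈ T → h ≤ a → a < b → δm h a < δm h b := by
    intro a b ha hb hha hab
    have h0a : t0 ≤ a := le_trans (le_of_lt hht0) hha
    have h0b : t0 ≤ b := le_trans h0a (le_of_lt hab)
    exact P1m h a b (hdom a ha h0a).1 (hdom b hb h0b).1 hha hab
  have hF5 : ∀ t, t ∈ T → h < t → h ≤ δm h t := by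
    intro t ht hht
    have h1 : t0 < δm h t := by
      have h2 := hF4 h t hhT ht le_rfl hht
      rwa [hF3] at h2
    have h2 : δm h t ∈ T := hδmT t ht (le_trans (le_of_lt hht0) (le_of_lt hht))
    by_contra hc
    exact hgap _ h2 ⟨h1, lt_of_not_ge hc⟩
  have hF6 : ∀ t, t ∈ T → t0 ≤ t → t < δp h t ∧ δp h t ∈ T ∧ δm h (δp h t) = t := by
    intro t ht h0
    have hts := hF0 t ht h0
    obtain ⟨hd0, he0⟩ := P3b t hts
    have hdp := (hdom t ht h0).2
    have hlt := P2p t0 h t hd0 hdp hht0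
    rw [he0] at hlt
    obtain ⟨hd1, he1⟩ := P4p h t hdp
    exact ⟨hlt, hTstarsub hd1.2.2.1, he1⟩
  -- the key claim: nothing in T strictly between δm h t and t
  have key : ∀ t, t ∈ T → t0 ≤ t → ∀ s, s ∈ T → δm h t < s → t ≤ s := by
    intro t ht h0 s hs hlt
    by_contra hc
    push_neg at hc
    rcases eq_or_lt_of_le h0 with rfl | h0'
    · -- t = t0
      obtain ⟨r, hr, hr0, hre⟩ := honto2 s hs (le_of_lt hlt)
      rcases eq_or_lt_of_le hr0 with rfl | hr0'
      · exact absurd hre (ne_of_lt hlt)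
      · have hrh : h ≤ r := by
          by_contra hch
          exact hgap r hr ⟨hr0', lt_of_not_ge hch⟩
        rcases eq_or_lt_of_le hrh with rfl | hrh'
        · rw [hF3] at hre
          exact absurd hre (ne_of_gt hc)
        · have h1 := hF4 h r hhT hr le_rfl hrh'
          rw [hF3, hre] at h1
          exact absurd hc (not_lt.mpr (le_of_lt h1))
    · have hth : h ≤ t := by
        by_contra hch
        exact hgap t ht ⟨h0', lt_of_not_ge hch⟩
      rcases eq_or_lt_of_le hth with rfl | hth'
      · rw [hF3] at hlt
        exact hgap s hs ⟨hlt, hc⟩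
      · -- t > h : infimum descent argument
        have hBne : {b | b ∈ T ∧ h ≤ b ∧ ∃ s', s' ∈ T ∧ δm h b < s' ∧ s' < b}.Nonempty :=
          ⟨t, ht, hth, s, hs, hlt, hc⟩
        set B : Set ℝ := {b | b ∈ T ∧ h ≤ b ∧ ∃ s', s' ∈ T ∧ δm h b < s' ∧ s' < b} with hBdef
        have hBsub : B ⊆ T := fun b hb => hb.1
        have hBbdd : BddBelow B := ⟨h, fun b hb => hb.2.1⟩
        have hLB : ∀ b ∈ B, sInf B ≤ b := fun b hb => csInf_le hBbdd hb
        have hLT : sInf B ∈ T := by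
          have h1 : sInf B ∈ closure B := csInf_mem_closure hBne hBbdd
          have h2 : closure B ⊆ T := hTcl.closure_eq ▸ closure_mono hBsub
          exact h2 h1
        have hLh : h ≤ sInf B := le_csInf hBne (fun b hb => hb.2.1)
        have hL0 : t0 ≤ sInf B := le_trans (le_of_lt hht0) hLh
        have hstep : ∀ b, b ∈ B → δm h b ∈ B := by
          intro b hb
          obtain ⟨hbT, hbh, s', hs'T, hs'1, hs'2⟩ := hb
          have hbh' : h < b := by
            rcases eq_or_lt_of_le hbh with rfl | h' 
            · rw [hF3] at hs'1
              exact (hgap s' hs'T ⟨hs'1, hs'2⟩).elim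
            · exact h'
          have hδb : h ≤ δm h b := hF5 b hbT hbh'
          have hδbT : δm h b ∈ T := hδmT b hbT (le_trans (le_of_lt hht0) hbh)
          have hs'h : h ≤ s' := le_trans hδb (le_of_lt hs'1)
          have hs'T' : δm h s' ∈ T := hδmT s' hs'T (le_trans (le_of_lt hht0) hs'h)
          exact ⟨hδbT, hδb, δm h s', hs'T',
            hF4 (δm h b) s' hδbT hs'T hδb hs'1, hF4 s' b hs'T hbT hs'h hs'2⟩
        obtain ⟨h1, h2, h3⟩ := hF6 (sInf B) hLT hL0
        obtain ⟨b, hbB, hbu⟩ := exists_lt_of_csInf_lt hBne h1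
        have hδbB := hstep b hbB
        have hLδb := hLB _ hδbB
        have h4 : δm h b < δm h (δp h (sInf B)) :=
          hF4 b (δp h (sInf B)) (hBsub hbB) h2 hbB.2.1 hbu
        rw [h3] at h4
        exact absurd hLδb (not_le.mpr h4)
  have part1 : ∀ t, t ∈ T → t0 ≤ t → σ (δm h t) = t := by
    intro t ht h0
    rw [hσ]
    have h2 := hF2 t ht h0
    apply le_antisymm
    · exact csInf_le ⟨t, fun x hx => key t ht h0 x hx.1 hx.2⟩ ⟨ht, h2⟩
    · exact le_csInf ⟨t, ht, h2⟩ (fun x hx => key t ht h0 x hx.1 hx.2)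
  refine ⟨part1, ?_⟩
  intro u hu hul
  obtain ⟨r, hrT, hr0, hre⟩ := honto2 u hu hul
  have hlt := hF2 r hrT hr0
  rw [hre] at hlt
  have hσu : σ u = r := by rw [← hre]; exact part1 r hrT hr0
  rw [hσu]
  exact hlt
end

section
/- Assume there exists λ > 0 such that −λ/(h(1+λ)) ≤ Q(t) ≤ −λ·h·b(t+h)² for all t ≥ t₀. Then along any solution x of the delay differential equation, the function V is differentiable on [t₀,∞) and satisfies V′(t) ≤ Q(t)·V(t) for all t ≥ t₀. -/
open MeasureTheory intervalIntegral Set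

lemma prim_intInt {c : ℝ} {f : ℝ → ℝ} (hf : ContinuousOn f (Set.Ici c))
    {u v : ℝ} (hu : c ≤ u) (hv : c ≤ v) : IntervalIntegrable f volume u v :=
  (hf.mono (Set.Icc_subset_Ici_self.trans (Set.Ici_subset_Ici.mpr (le_inf hu hv)))).intervalIntegrable

lemma prim_hasDeriv {c : ℝ} {f : ℝ → ℝ} (hf : ContinuousOn f (Set.Ici c)) :
    ∀ u, c ≤ u → HasDerivWithinAt (fun v => ∫ s in c..v, f s) (f u) (Set.Ici c) u := by
  intro u hu
  have hint : IntervalIntegrable f volume c u := prim_intInt hf le_rfl hu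
  rcases eq_or_lt_of_le hu with heq | hu'
  · subst heq
    exact intervalIntegral.integral_hasDerivWithinAt_right (s := Set.Ici c) (t := Set.Ioi c) hint
      ⟨Set.Ici c, Filter.mem_of_superset self_mem_nhdsWithin Set.Ioi_subset_Ici_self,
        hf.aestronglyMeasurable measurableSet_Ici⟩
      ((hf c Set.self_mem_Ici).mono Set.Ioi_subset_Ici_self)
  · have hcont : ContinuousAt f u := hf.continuousAt (Ici_mem_nhds hu')
    exact (intervalIntegral.integral_hasDerivAt_right hint
      ⟨Set.Ici c, Ici_mem_nhds hu', hf.aestronglyMeasurable measurableSet_Ici⟩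
      hcont).hasDerivWithinAt


lemma arith10 (h lam q beta X I P W : ℝ) (hh : 0 < h) (hlam : 0 < lam)
    (hq1 : -lam / (h * (1 + lam)) ≤ q) (hq2 : q ≤ -lam * h * beta ^ 2)
    (hPnn : 0 ≤ P) (hWle : W ≤ h * P) (hCS : I ^ 2 ≤ h * P) :
    2 * (X + I) * (q * X) + lam * (h * (beta ^ 2 * X ^ 2) - P)
      ≤ q * ((X + I) ^ 2 + lam * W) := by
  have h1l : (0:ℝ) < 1 + lam := by linarith
  have hqnp : q ≤ 0 := by nlinarith [mul_nonneg (mul_nonneg hlam.le hh.le) (sq_nonneg beta)]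
  have s1 : lam * (h * (beta ^ 2 * X ^ 2)) ≤ -q * X ^ 2 := by
    nlinarith [mul_le_mul_of_nonneg_right hq2 (sq_nonneg X)]
  have h1 : -q ≤ lam / (h * (1 + lam)) := by
    have e : -lam / (h * (1 + lam)) = -(lam / (h * (1 + lam))) := by ring
    linarith [e ▸ hq1]
  have s2 : -q * I ^ 2 ≤ lam / (h * (1 + lam)) * I ^ 2 :=
    mul_le_mul_of_nonneg_right h1 (sq_nonneg I)
  have s3 : lam / (h * (1 + lam)) * I ^ 2 ≤ lam / (h * (1 + lam)) * (h * P) :=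
    mul_le_mul_of_nonneg_left hCS (by positivity)
  have s4 : lam / (h * (1 + lam)) * (h * P) = lam / (1 + lam) * P := by
    field_simp
  have s5 : q * (h * P) ≤ q * W := mul_le_mul_of_nonpos_left hWle hqnp
  have s6 : -lam / (h * (1 + lam)) * (h * P) ≤ q * (h * P) :=
    mul_le_mul_of_nonneg_right hq1 (by positivity)
  have s7 : -lam / (h * (1 + lam)) * (h * P) = -(lam / (1 + lam)) * P := by
    field_simp
  have ring1 : 2 * (X + I) * (q * X) = q * (X + I) ^ 2 - q * I ^ 2 + q * X ^ 2 := by ring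
  have ringG : q * ((X + I) ^ 2 + lam * W) = q * (X + I) ^ 2 + lam * (q * W) := by ring
  have s5' : lam * (q * (h * P)) ≤ lam * (q * W) := mul_le_mul_of_nonneg_left s5 hlam.le
  have s6' : lam * (-lam / (h * (1 + lam)) * (h * P)) ≤ lam * (q * (h * P)) :=
    mul_le_mul_of_nonneg_left s6 hlam.le
  have s7' : lam * (-lam / (h * (1 + lam)) * (h * P)) = lam * (-(lam / (1 + lam)) * P) := by
    rw [s7]
  have s8 : lam / (1 + lam) * P - lam * P = lam * (-(lam / (1 + lam)) * P) := by
    field_simp; ring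
  linarith [s1, s2, s3, s4, s5', s6', s7', s8, ring1, ringG]

theorem stmt10 (t0 h lam : ℝ) (hh : 0 < h) (hlam : 0 < lam)
    (a b x : ℝ → ℝ) (ha : Continuous a) (hb : Continuous b)
    -- x is a solution of the delay differential equation
    (hxc : ContinuousOn x (Set.Ici (t0 - h)))
    (hx : ∀ t, t0 ≤ t → HasDerivWithinAt x (a t * x t + b t * x (t - h)) (Set.Ici t0) t)
    -- the auxiliary functions Q, A, V
    (Q A V : ℝ → ℝ)
    (hQ : ∀ t, Q t = a t + b (t + h))
    (hA : ∀ t, A t = x t + ∫ s in (t - h)..t, b (s + h) * x s)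
    (hV : ∀ t, V t = (A t) ^ 2 +
        lam * ∫ s in (t - h)..t, (∫ u in s..t, (b (u + h)) ^ 2 * (x u) ^ 2))
    -- the condition −λ/(h(1+λ)) ≤ Q(t) ≤ −λ·h·b(t+h)²
    (hcond : ∀ t, t0 ≤ t →
        -lam / (h * (1 + lam)) ≤ Q t ∧ Q t ≤ -lam * h * (b (t + h)) ^ 2) :
    ∀ t, t0 ≤ t → ∃ d, HasDerivWithinAt V d (Set.Ici t0) t ∧ d ≤ Q t * V t := by
  intro t ht
  set c : ℝ := t0 - h with hcdef
  have hct0 : c ≤ t0 := by simp only [hcdef]; linarith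
  set f : ℝ → ℝ := fun s => b (s + h) * x s with hfdef
  set g : ℝ → ℝ := fun s => (b (s + h)) ^ 2 * (x s) ^ 2 with hgdef
  have hfc : ContinuousOn f (Set.Ici c) :=
    ((hb.comp (continuous_add_right h)).continuousOn).mul hxc
  have hgc : ContinuousOn g (Set.Ici c) :=
    (((hb.comp (continuous_add_right h)).pow 2).continuousOn).mul (hxc.pow 2)
  have hgnn : ∀ s, 0 ≤ g s := fun s => by simp only [hgdef]; positivity
  set F : ℝ → ℝ := fun v => ∫ s in c..v, f s with hFdef
  set G : ℝ → ℝ := fun v => ∫ s in c..v, g s with hGdef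
  have hF' := prim_hasDeriv hfc
  have hG' := prim_hasDeriv hgc
  have hGcont : ContinuousOn G (Set.Ici c) := fun u hu =>
    ((hG' u hu).differentiableWithinAt).continuousWithinAt
  set H : ℝ → ℝ := fun v => ∫ s in c..v, G s with hHdef
  have hH' := prim_hasDeriv hGcont
  have hsub : Set.Ici t0 ⊆ Set.Ici c := Set.Ici_subset_Ici.mpr hct0
  have hmaps : Set.MapsTo (fun u => u - h) (Set.Ici t0) (Set.Ici c) := fun u hu => by
    simp only [Set.mem_Ici] at hu ⊢
    rw [hcdef]; linarith
  -- basic inequalities for points ≥ t0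
  have hcy : ∀ y : ℝ, t0 ≤ y → c ≤ y := fun y hy => le_trans hct0 hy
  have hcyh : ∀ y : ℝ, t0 ≤ y → c ≤ y - h := fun y hy => by simp only [hcdef]; linarith
  -- interval rewrites
  have hIeq : ∀ y, t0 ≤ y → (∫ s in (y - h)..y, f s) = F y - F (y - h) := by
    intro y hy
    exact (intervalIntegral.integral_interval_sub_left
      (prim_intInt hfc le_rfl (hcy y hy)) (prim_intInt hfc le_rfl (hcyh y hy))).symm
  have hPeq : ∀ y, t0 ≤ y → (∫ s in (y - h)..y, g s) = G y - G (y - h) := by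
    intro y hy
    exact (intervalIntegral.integral_interval_sub_left
      (prim_intInt hgc le_rfl (hcy y hy)) (prim_intInt hgc le_rfl (hcyh y hy))).symm
  have hHeq : ∀ y, t0 ≤ y → (∫ s in (y - h)..y, G s) = H y - H (y - h) := by
    intro y hy
    exact (intervalIntegral.integral_interval_sub_left
      (prim_intInt hGcont le_rfl (hcy y hy)) (prim_intInt hGcont le_rfl (hcyh y hy))).symm
  have hWeq : ∀ y, t0 ≤ y →
      (∫ s in (y - h)..y, ∫ u in s..y, g u) = h * G y - (H y - H (y - h)) := by
    intro y hy
    have h1 : ∀ s ∈ Set.uIcc (y - h) y, (∫ u in s..y, g u) = G y - G s := by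
      intro s hs
      rw [Set.uIcc_of_le (by linarith)] at hs
      exact (intervalIntegral.integral_interval_sub_left
        (prim_intInt hgc le_rfl (hcy y hy)) (prim_intInt hgc le_rfl (le_trans (hcyh y hy) hs.1))).symm
    rw [intervalIntegral.integral_congr h1,
      intervalIntegral.integral_sub intervalIntegrable_const
        (prim_intInt hGcont (hcyh y hy) (hcy y hy)),
      intervalIntegral.integral_const, hHeq y hy]
    have : y - (y - h) = h := by ring
    rw [this, smul_eq_mul]
  -- V agrees with the explicit expression on [t0, ∞)
  have hVE : ∀ y ∈ Set.Ici t0, V y =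
      (x y + (F y - F (y - h))) ^ 2 + lam * (h * G y - (H y - H (y - h))) := by
    intro y hy
    rw [hV y, hA y]
    have h1 : (∫ s in (y - h)..y, b (s + h) * x s) = F y - F (y - h) := hIeq y hy
    have h2 : (∫ s in (y - h)..y, ∫ u in s..y, (b (u + h)) ^ 2 * (x u) ^ 2)
        = h * G y - (H y - H (y - h)) := hWeq y hy
    rw [h1, h2]
  -- derivative computations at t
  have hFt : HasDerivWithinAt F (f t) (Set.Ici t0) t := (hF' t (hcy t ht)).mono hsub
  have hFth : HasDerivWithinAt (fun y => F (y - h)) (f (t - h) * 1) (Set.Ici t0) t :=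
    by have := HasDerivWithinAt.comp t (hF' (t - h) (hcyh t ht))
        ((hasDerivWithinAt_id t (Set.Ici t0)).sub_const h) hmaps; exact this
  have hGt : HasDerivWithinAt G (g t) (Set.Ici t0) t := (hG' t (hcy t ht)).mono hsub
  have hHt : HasDerivWithinAt H (G t) (Set.Ici t0) t := (hH' t (hcy t ht)).mono hsub
  have hHth : HasDerivWithinAt (fun y => H (y - h)) (G (t - h) * 1) (Set.Ici t0) t :=
    by have := HasDerivWithinAt.comp t (hH' (t - h) (hcyh t ht))
        ((hasDerivWithinAt_id t (Set.Ici t0)).sub_const h) hmaps; exact this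
  have hAt : HasDerivWithinAt (fun y => x y + (F y - F (y - h))) (Q t * x t) (Set.Ici t0) t := by
    have h0 := (hx t ht).add (hFt.sub hFth)
    refine h0.congr_deriv ?_
    simp only [hQ, hfdef, show t - h + h = t from by ring]
    all_goals ring
  have hsq : HasDerivWithinAt (fun y => (x y + (F y - F (y - h))) ^ 2)
      (2 * (x t + (F t - F (t - h))) * (Q t * x t)) (Set.Ici t0) t := by
    have := hAt.pow 2
    norm_num at this
    refine this.congr_deriv ?_
    all_goals ring
  have hE : HasDerivWithinAt
      (fun y => (x y + (F y - F (y - h))) ^ 2 + lam * (h * G y - (H y - H (y - h))))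
      (2 * (x t + (F t - F (t - h))) * (Q t * x t) + lam * (h * g t - (G t - G (t - h) * 1)))
      (Set.Ici t0) t :=
    hsq.add (((hGt.const_mul h).sub (hHt.sub hHth)).const_mul lam)
  have hVd : HasDerivWithinAt V
      (2 * (x t + (F t - F (t - h))) * (Q t * x t) + lam * (h * g t - (G t - G (t - h) * 1)))
      (Set.Ici t0) t := hE.congr hVE (hVE t ht)
  refine ⟨_, hVd, ?_⟩
  -- now the inequality
  obtain ⟨hq1, hq2⟩ := hcond t ht
  have hVt : V t = (x t + (F t - F (t - h))) ^ 2
      + lam * (h * G t - (H t - H (t - h))) := hVE t ht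
  rw [hVt]
  set X := x t with hX
  set q := Q t with hq
  set β := b (t + h) with hβ
  set I := F t - F (t - h) with hI
  set P := G t - G (t - h) with hP
  set W := h * G t - (H t - H (t - h)) with hW
  have hgt : g t = β ^ 2 * X ^ 2 := by simp only [hgdef]; rfl
  -- P ≥ 0
  have hPnn : 0 ≤ P := by
    rw [hP, ← hPeq t ht]
    exact intervalIntegral.integral_nonneg (by linarith) (fun u _ => hgnn u)
  -- W ≤ h * P
  have hWle : W ≤ h * P := by
    have hmono : (∫ s in (t - h)..t, G (t - h)) ≤ ∫ s in (t - h)..t, G s := by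
      apply intervalIntegral.integral_mono_on (by linarith) intervalIntegrable_const
        (prim_intInt hGcont (hcyh t ht) (hcy t ht))
      intro s hs
      have h1 : G s - G (t - h) = ∫ u in (t - h)..s, g u :=
        intervalIntegral.integral_interval_sub_left
          (prim_intInt hgc le_rfl (le_trans (hcyh t ht) hs.1))
          (prim_intInt hgc le_rfl (hcyh t ht))
      have h2 : 0 ≤ ∫ u in (t - h)..s, g u :=
        intervalIntegral.integral_nonneg hs.1 (fun u _ => hgnn u)
      linarith
    rw [intervalIntegral.integral_const, hHeq t ht, smul_eq_mul] at hmono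
    have : t - (t - h) = h := by ring
    rw [this] at hmono
    simp only [hW, hP]
    nlinarith
  -- Cauchy-Schwarz : I ^ 2 ≤ h * P
  have hCS : I ^ 2 ≤ h * P := by
    have hJ : I = ∫ s in (t - h)..t, f s := (hIeq t ht).symm
    have hK : P = ∫ s in (t - h)..t, (f s) ^ 2 := by
      rw [hP, ← hPeq t ht]
      apply intervalIntegral.integral_congr
      intro s _
      simp only [hgdef, hfdef]; ring
    have hfint : IntervalIntegrable f volume (t - h) t :=
      prim_intInt hfc (hcyh t ht) (hcy t ht)
    have hf2int : IntervalIntegrable (fun s => (f s) ^ 2) volume (t - h) t :=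
      prim_intInt (hfc.pow 2) (hcyh t ht) (hcy t ht)
    have key : 0 ≤ ∫ s in (t - h)..t, (f s - I / h) ^ 2 :=
      intervalIntegral.integral_nonneg (by linarith) (fun u _ => sq_nonneg _)
    have expand : (fun s => (f s - I / h) ^ 2)
        = fun s => ((f s) ^ 2 - (2 * (I / h)) * f s + (I / h) ^ 2) := by
      funext s; ring
    rw [expand, intervalIntegral.integral_add (hf2int.sub (hfint.const_mul _))
      intervalIntegrable_const, intervalIntegral.integral_sub hf2int (hfint.const_mul _),
      intervalIntegral.integral_const_mul, intervalIntegral.integral_const, ← hJ, ← hK,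
      smul_eq_mul] at key
    have hth : t - (t - h) = h := by ring
    rw [hth] at key
    have hhne : h ≠ 0 := ne_of_gt hh
    have e : P - 2 * (I / h) * I + h * (I / h) ^ 2 = P - I ^ 2 / h := by
      field_simp; ring
    have h2 : 0 ≤ P - I ^ 2 / h := by linarith [key, e]
    have h4 : I ^ 2 / h ≤ P := by linarith
    have h5 : I ^ 2 ≤ P * h := (div_le_iff₀ hh).mp h4
    linarith [h5]
  -- final arithmetic
  have hd : 2 * (X + I) * (q * X) + lam * (h * g t - (G t - G (t - h) * 1))
      = 2 * (X + I) * (q * X) + lam * (h * (β ^ 2 * X ^ 2) - P) := by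
    rw [hgt, hP]; ring
  rw [hd]
  clear_value X q β I P W
  exact arith10 h lam q β X I P W hh hlam hq1 hq2 hPnn hWle hCS
end

section
/- Assume there exists λ > 0 such that −λ/(h + λ(h+1)) ≤ Q(t) ≤ −λ(h+1)·b(t+h)² − Q(t)² for all integers t ≥ t₀. Then along any solution x of the delay difference equation, V(t+1) − V(t) ≤ Q(t)·V(t) for all integers t ≥ t₀. -/
private lemma sum_Icc_top' {a b : ℤ} (hab : a ≤ b) (g : ℤ → ℝ) :
    ∑ s ∈ Finset.Icc a b, g s = (∑ s ∈ Finset.Icc a (b - 1), g s) + g b := by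
  have h1 : Finset.Icc a b = insert b (Finset.Icc a (b - 1)) := by
    ext z; simp only [Finset.mem_Icc, Finset.mem_insert]; omega
  rw [h1, Finset.sum_insert (by simp only [Finset.mem_Icc]; omega)]
  ring

private lemma sum_Icc_bot' {a b : ℤ} (hab : a ≤ b) (g : ℤ → ℝ) :
    ∑ s ∈ Finset.Icc a b, g s = g a + ∑ s ∈ Finset.Icc (a + 1) b, g s := by
  have h1 : Finset.Icc a b = insert a (Finset.Icc (a + 1) b) := by
    ext z; simp only [Finset.mem_Icc, Finset.mem_insert]; omega
  rw [h1, Finset.sum_insert (by simp only [Finset.mem_Icc]; omega)]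

theorem stmt11 (t0 h : ℤ) (hh : 1 ≤ h) (lam : ℝ) (hlam : 0 < lam)
    (a b x : ℤ → ℝ)
    -- x is a solution of the delay difference equation
    (hx : ∀ t, t0 ≤ t → x (t + 1) - x t = a t * x t + b t * x (t - h))
    -- the auxiliary functions Q, A, V
    (Q A V : ℤ → ℝ)
    (hQ : ∀ t, Q t = a t + b (t + h))
    (hA : ∀ t, A t = x t + ∑ s ∈ Finset.Icc (t - h) (t - 1), b (s + h) * x s)
    (hV : ∀ t, V t = (A t) ^ 2 +
        lam * ∑ s ∈ Finset.Icc (t - h) (t - 1),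
          ∑ u ∈ Finset.Icc s (t - 1), (b (u + h)) ^ 2 * (x u) ^ 2)
    -- the condition −λ/(h + λ(h+1)) ≤ Q(t) ≤ −λ(h+1)·b(t+h)² − Q(t)²
    (hcond : ∀ t, t0 ≤ t →
        -lam / ((h : ℝ) + lam * ((h : ℝ) + 1)) ≤ Q t ∧
        Q t ≤ -lam * ((h : ℝ) + 1) * (b (t + h)) ^ 2 - (Q t) ^ 2) :
    ∀ t, t0 ≤ t → V (t + 1) - V t ≤ Q t * V t := by
  intro t ht
  obtain ⟨hc1, hc2⟩ := hcond t ht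
  have hhR : (1 : ℝ) ≤ (h : ℝ) := by exact_mod_cast hh
  have hb2 : (0 : ℝ) ≤ lam * ((h : ℝ) + 1) * (b (t + h)) ^ 2 := by positivity
  -- Q t ≤ 0
  have hQ0 : Q t ≤ 0 := by nlinarith [sq_nonneg (Q t)]
  -- the lower condition in product form
  have hD : (0 : ℝ) < (h : ℝ) + lam * ((h : ℝ) + 1) := by nlinarith
  have hlow' : -lam ≤ Q t * ((h : ℝ) + lam * ((h : ℝ) + 1)) := by
    rw [div_le_iff₀ hD] at hc1; linarith
  have hlow : -lam ≤ Q t * ((h : ℝ) + lam * (h : ℝ)) := by nlinarith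
  -- scalar coefficient inequalities (proved early, small context)
  have hkey3 : Q t ^ 2 + Q t + lam * (h : ℝ) * (b (t + h)) ^ 2 ≤ 0 := by
    nlinarith [mul_nonneg hlam.le (sq_nonneg (b (t + h)))]
  have hkey4 : (-Q t) * (h : ℝ) + (-(lam * Q t)) * (h : ℝ) - lam ≤ 0 := by nlinarith
  have hnn2 : 0 ≤ -(lam * Q t) := by nlinarith
  -- abbreviations
  set S : ℝ := ∑ s ∈ Finset.Icc (t - h) (t - 1), (b (s + h)) ^ 2 * (x s) ^ 2 with hSdef
  set B : ℝ := ∑ s ∈ Finset.Icc (t - h) (t - 1), b (s + h) * x s with hBdef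
  set W : ℝ := ∑ s ∈ Finset.Icc (t - h) (t - 1),
      ∑ u ∈ Finset.Icc s (t - 1), (b (u + h)) ^ 2 * (x u) ^ 2 with hWdef
  have hS0 : 0 ≤ S := Finset.sum_nonneg fun s _ => by positivity
  have hW0 : 0 ≤ W := Finset.sum_nonneg fun s _ =>
    Finset.sum_nonneg fun u _ => by positivity
  -- cardinalities
  have hcard : ((Finset.Icc (t - h) (t - 1)).card : ℝ) = (h : ℝ) := by
    rw [Int.card_Icc, show (t - 1 + 1 - (t - h)) = h from by ring]
    have h0 : (h.toNat : ℤ) = h := Int.toNat_of_nonneg (by omega)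
    exact_mod_cast h0
  have hcard2 : ((Finset.Icc (t + 1 - h) t).card : ℝ) = (h : ℝ) := by
    rw [Int.card_Icc, show (t + 1 - (t + 1 - h)) = h from by ring]
    have h0 : (h.toNat : ℤ) = h := Int.toNat_of_nonneg (by omega)
    exact_mod_cast h0
  -- A(t+1) = A t + Q t * x t
  have hAt : A t = x t + B := hA t
  have hdA : A (t + 1) = A t + Q t * x t := by
    have h1 := hA (t + 1)
    simp only [add_sub_cancel_right] at h1
    rw [sum_Icc_top' (by omega) _] at h1
    have h2 : B = b (t - h + h) * x (t - h)
        + ∑ s ∈ Finset.Icc (t - h + 1) (t - 1), b (s + h) * x s := by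
      rw [hBdef, sum_Icc_bot' (by omega)]
    rw [show t - h + h = t from by ring] at h2
    have hx' := hx t ht
    rw [h1, hAt, hQ t, h2, show t + 1 - h = t - h + 1 from by ring]
    linarith
  -- W(t+1) = W + h * f t - S
  have hWt1 : (∑ s ∈ Finset.Icc (t + 1 - h) (t + 1 - 1),
        ∑ u ∈ Finset.Icc s (t + 1 - 1), (b (u + h)) ^ 2 * (x u) ^ 2)
      = W + (h : ℝ) * ((b (t + h)) ^ 2 * (x t) ^ 2) - S := by
    rw [show t + 1 - 1 = t from by ring]
    have step1 : (∑ s ∈ Finset.Icc (t + 1 - h) t,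
          ∑ u ∈ Finset.Icc s t, (b (u + h)) ^ 2 * (x u) ^ 2)
        = (∑ s ∈ Finset.Icc (t + 1 - h) t,
            ∑ u ∈ Finset.Icc s (t - 1), (b (u + h)) ^ 2 * (x u) ^ 2)
          + (h : ℝ) * ((b (t + h)) ^ 2 * (x t) ^ 2) := by
      calc (∑ s ∈ Finset.Icc (t + 1 - h) t,
              ∑ u ∈ Finset.Icc s t, (b (u + h)) ^ 2 * (x u) ^ 2)
          = ∑ s ∈ Finset.Icc (t + 1 - h) t,
              ((∑ u ∈ Finset.Icc s (t - 1), (b (u + h)) ^ 2 * (x u) ^ 2)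
                + (b (t + h)) ^ 2 * (x t) ^ 2) := by
            apply Finset.sum_congr rfl
            intro s hs
            rw [Finset.mem_Icc] at hs
            exact sum_Icc_top' hs.2 _
        _ = (∑ s ∈ Finset.Icc (t + 1 - h) t,
              ∑ u ∈ Finset.Icc s (t - 1), (b (u + h)) ^ 2 * (x u) ^ 2)
            + ∑ _s ∈ Finset.Icc (t + 1 - h) t, (b (t + h)) ^ 2 * (x t) ^ 2 :=
            Finset.sum_add_distrib
        _ = _ := by rw [Finset.sum_const, nsmul_eq_mul, hcard2]
    rw [step1]
    have step2 : (∑ s ∈ Finset.Icc (t + 1 - h) t,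
          ∑ u ∈ Finset.Icc s (t - 1), (b (u + h)) ^ 2 * (x u) ^ 2)
        = ∑ s ∈ Finset.Icc (t + 1 - h) (t - 1),
            ∑ u ∈ Finset.Icc s (t - 1), (b (u + h)) ^ 2 * (x u) ^ 2 := by
      rw [sum_Icc_top' (by omega)
        (fun s => ∑ u ∈ Finset.Icc s (t - 1), (b (u + h)) ^ 2 * (x u) ^ 2)]
      rw [Finset.Icc_eq_empty (by omega : ¬ (t : ℤ) ≤ t - 1)]
      simp
    rw [step2]
    have step3 : W = S + ∑ s ∈ Finset.Icc (t - h + 1) (t - 1),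
        ∑ u ∈ Finset.Icc s (t - 1), (b (u + h)) ^ 2 * (x u) ^ 2 := by
      rw [hWdef, sum_Icc_bot' (by omega)
        (fun s => ∑ u ∈ Finset.Icc s (t - 1), (b (u + h)) ^ 2 * (x u) ^ 2)]
    rw [show t + 1 - h = t - h + 1 from by ring, step3]
    ring
  -- V values
  have hVt : V t = (A t) ^ 2 + lam * W := hV t
  have hVt1 : V (t + 1) = (A t + Q t * x t) ^ 2
      + lam * (W + (h : ℝ) * ((b (t + h)) ^ 2 * (x t) ^ 2) - S) := by
    rw [hV (t + 1), hdA, hWt1]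
  -- Cauchy-Schwarz: B^2 ≤ h * S
  have hB2 : B ^ 2 ≤ (h : ℝ) * S := by
    have hcs := sq_sum_le_card_mul_sum_sq (s := Finset.Icc (t - h) (t - 1))
      (f := fun s => b (s + h) * x s)
    rw [hcard] at hcs
    calc B ^ 2 ≤ (h : ℝ) * ∑ s ∈ Finset.Icc (t - h) (t - 1), (b (s + h) * x s) ^ 2 := hcs
      _ = (h : ℝ) * S := by
          rw [hSdef]; congr 1; apply Finset.sum_congr rfl; intro s _; ring
  -- W ≤ h * S
  have hWS : W ≤ (h : ℝ) * S := by
    have hle : W ≤ ∑ _s ∈ Finset.Icc (t - h) (t - 1), S := by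
      apply Finset.sum_le_sum
      intro s hs
      rw [Finset.mem_Icc] at hs
      apply Finset.sum_le_sum_of_subset_of_nonneg
      · intro u hu
        rw [Finset.mem_Icc] at hu ⊢
        omega
      · intro u _ _; positivity
    calc W ≤ ∑ _s ∈ Finset.Icc (t - h) (t - 1), S := hle
      _ = (h : ℝ) * S := by rw [Finset.sum_const, nsmul_eq_mul, hcard]
  -- main expression
  have hexpr : V (t + 1) - V t - Q t * V t
      = (Q t ^ 2 + Q t + lam * (h : ℝ) * (b (t + h)) ^ 2) * (x t) ^ 2
        + (-Q t) * B ^ 2 + (-(lam * Q t)) * W + (-lam) * S := by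
    rw [hVt1, hVt, hAt]
    ring
  -- bounds
  have key1 : (-Q t) * B ^ 2 ≤ (-Q t) * ((h : ℝ) * S) :=
    mul_le_mul_of_nonneg_left hB2 (by linarith)
  have key2 : (-(lam * Q t)) * W ≤ (-(lam * Q t)) * ((h : ℝ) * S) :=
    mul_le_mul_of_nonneg_left hWS hnn2
  have key3 : (Q t ^ 2 + Q t + lam * (h : ℝ) * (b (t + h)) ^ 2) * (x t) ^ 2 ≤ 0 :=
    mul_nonpos_of_nonpos_of_nonneg hkey3 (by positivity)
  have key4 : ((-Q t) * (h : ℝ) + (-(lam * Q t)) * (h : ℝ) - lam) * S ≤ 0 :=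
    mul_nonpos_of_nonpos_of_nonneg hkey4 hS0
  linarith [key1, key2, key3, key4, hexpr]
end

section
/- Assume 1 + a(t) > 0 for all integers t ≥ t₀ and that there exists λ > 0 such that −λ/(1+2λ) ≤ Q(t) ≤ −2λ·b(t+1)² − Q(t)² for all integers t ≥ t₀. Then every solution x satisfies |x(t)| ≤ √( (1 + 1/λ)·V(t₀) ) · exp( (1/2) Σ_{s=t₀}^{t−1} Q(s) ) for all integers t ≥ t₀. -/
theorem stmt14 (t0 : ℤ) (lam : ℝ) (hlam : 0 < lam)
    (a b x : ℤ → ℝ)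
    (ha : ∀ t, t0 ≤ t → 0 < 1 + a t)
    -- x is a solution of the delay difference equation
    (hx : ∀ t, t0 ≤ t → x (t + 1) - x t = a t * x t + b t * x (t - 1))
    -- the auxiliary functions Q, A, V
    (Q A V : ℤ → ℝ)
    (hQ : ∀ t, Q t = a t + b (t + 1))
    (hA : ∀ t, A t = x t + b t * x (t - 1))
    (hV : ∀ t, V t = (A t) ^ 2 + lam * (b t) ^ 2 * (x (t - 1)) ^ 2)
    -- the condition −λ/(1+2λ) ≤ Q(t) ≤ −2λ·b(t+1)² − Q(t)²
    (hcond : ∀ t, t0 ≤ t →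
        -lam / (1 + 2 * lam) ≤ Q t ∧ Q t ≤ -2 * lam * (b (t + 1)) ^ 2 - (Q t) ^ 2) :
    ∀ t, t0 ≤ t →
      |x t| ≤ Real.sqrt ((1 + 1 / lam) * V t0) *
        Real.exp ((1 / 2) * ∑ s ∈ Finset.Icc t0 (t - 1), Q s) := by
  have hlam' : (0:ℝ) < 1 + 2 * lam := by linarith
  have hVnn : ∀ t, 0 ≤ V t := by
    intro t; rw [hV]; positivity
  -- one step inequality
  have hstep : ∀ t, t0 ≤ t → V (t + 1) ≤ (1 + Q t) * V t := by
    intro t ht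
    obtain ⟨h1, h2⟩ := hcond t ht
    have e1 : x (t + 1) = x t + a t * x t + b t * x (t - 1) := by
      have := hx t ht; linarith
    have ht1 : t + 1 - 1 = t := by ring
    have hq : Q t = a t + b (t + 1) := hQ t
    have hB : (0:ℝ) ≤ lam * (b (t + 1)) ^ 2 := by positivity
    have hq0 : Q t ≤ 0 := by nlinarith [sq_nonneg (Q t)]
    have hq1 : -lam ≤ Q t * (1 + 2 * lam) := (div_le_iff₀ hlam').mp h1
    have hq2 : 0 ≤ Q t + lam + lam * Q t := by
      nlinarith [mul_nonneg hlam.le (neg_nonneg.mpr hq0)]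
    have h3 : Q t + (Q t) ^ 2 + lam * (b (t + 1)) ^ 2 ≤ 0 := by nlinarith
    rw [hV, hV, hA, hA, ht1, e1, hq]
    have hid : (1 + (a t + b (t + 1))) *
          ((x t + b t * x (t - 1)) ^ 2 + lam * b t ^ 2 * x (t - 1) ^ 2)
        - ((x t + a t * x t + b t * x (t - 1) + b (t + 1) * x t) ^ 2
            + lam * b (t + 1) ^ 2 * x t ^ 2)
      = ((a t + b (t + 1)) + lam + lam * (a t + b (t + 1))) * (b t * x (t - 1)) ^ 2
        - ((a t + b (t + 1)) + (a t + b (t + 1)) ^ 2 + lam * b (t + 1) ^ 2) * (x t) ^ 2 := by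
      ring
    rw [hq] at hq2 h3
    nlinarith [mul_nonneg hq2 (sq_nonneg (b t * x (t - 1))),
      mul_nonneg (neg_nonneg.mpr h3) (sq_nonneg (x t))]
  -- main decay estimate
  have hmain : ∀ t, t0 ≤ t →
      V t ≤ V t0 * Real.exp (∑ s ∈ Finset.Icc t0 (t - 1), Q s) := by
    intro t ht
    refine Int.le_induction (motive := fun u _ => V u ≤ V t0 * Real.exp (∑ s ∈ Finset.Icc t0 (u - 1), Q s)) ?_ ?_ t ht
    · have : Finset.Icc t0 (t0 - 1) = ∅ := Finset.Icc_eq_empty (by omega)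
      simp [this]
    · intro t ht ih
      have hE : 1 + Q t ≤ Real.exp (Q t) := by
        have := Real.add_one_le_exp (Q t); linarith
      have hsum : ∑ s ∈ Finset.Icc t0 (t + 1 - 1), Q s
          = Q t + ∑ s ∈ Finset.Icc t0 (t - 1), Q s := by
        have ht1 : t + 1 - 1 = t := by ring
        have hins : Finset.Icc t0 t = insert t (Finset.Icc t0 (t - 1)) := by
          ext s; simp [Finset.mem_Icc, Finset.mem_insert]; omega
        have hnot : t ∉ Finset.Icc t0 (t - 1) := by simp [Finset.mem_Icc]
        rw [ht1, hins, Finset.sum_insert hnot]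
      calc V (t + 1) ≤ (1 + Q t) * V t := hstep t ht
        _ ≤ Real.exp (Q t) * V t := mul_le_mul_of_nonneg_right hE (hVnn t)
        _ ≤ Real.exp (Q t) * (V t0 * Real.exp (∑ s ∈ Finset.Icc t0 (t - 1), Q s)) :=
            mul_le_mul_of_nonneg_left ih (Real.exp_pos _).le
        _ = V t0 * Real.exp (∑ s ∈ Finset.Icc t0 (t + 1 - 1), Q s) := by
            rw [hsum, Real.exp_add]; ring
  intro t ht
  -- pointwise bound by V
  have hx2 : (x t) ^ 2 ≤ (1 + 1 / lam) * V t := by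
    have key : lam * (x t) ^ 2 ≤ (lam + 1) * V t := by
      rw [hV, hA]
      nlinarith [sq_nonneg (x t + b t * x (t - 1) + lam * (b t * x (t - 1)))]
    have heq : (1 + 1 / lam) * V t = (lam + 1) * V t / lam := by
      field_simp
    rw [heq, le_div_iff₀ hlam]
    linarith [key]
  set S := ∑ s ∈ Finset.Icc t0 (t - 1), Q s with hS
  have hc : (0:ℝ) ≤ (1 + 1 / lam) * V t0 := by
    have : (0:ℝ) < 1 + 1 / lam := by positivity
    exact mul_nonneg this.le (hVnn t0)
  have hbound : (x t) ^ 2 ≤ ((1 + 1 / lam) * V t0) * Real.exp S := by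
    calc (x t) ^ 2 ≤ (1 + 1 / lam) * V t := hx2
      _ ≤ (1 + 1 / lam) * (V t0 * Real.exp S) := by
          apply mul_le_mul_of_nonneg_left (hmain t ht)
          positivity
      _ = ((1 + 1 / lam) * V t0) * Real.exp S := by ring
  have hRnn : 0 ≤ Real.sqrt ((1 + 1 / lam) * V t0) * Real.exp ((1 / 2) * S) := by
    positivity
  have hRsq : (Real.sqrt ((1 + 1 / lam) * V t0) * Real.exp ((1 / 2) * S)) ^ 2
      = ((1 + 1 / lam) * V t0) * Real.exp S := by
    have hhalf : (1 / 2 : ℝ) * S + (1 / 2) * S = S := by ring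
    rw [mul_pow, Real.sq_sqrt hc, sq, ← Real.exp_add, hhalf]
  have := Real.sqrt_le_sqrt (hbound.trans_eq hRsq.symm)
  rwa [Real.sqrt_sq_eq_abs, Real.sqrt_sq hRnn] at this
end

section
/- Let λ > 0 and define η(t) := exp( ∫_{t₀}^{t} a(u) du ) / ( 1 + λ ∫_{t−h}^{t} exp( ∫_{t₀}^{s+h} a(u) du ) ds ) and γ(t) := a(t) + λ·η(t). Suppose that |b(t)| ≤ λ·η(t) for all t ≥ t₀. Then every solution x with x = ψ on [t₀−h, t₀] satisfies |x(t)| ≤ V₀ · exp( ∫_{t₀}^{t} γ(s) ds ) for all t ≥ t₀, where V₀ := |x(t₀)| + λ·η(t₀) ∫_{t₀−h}^{t₀} |x(s)| ds. -/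
open Set Filter Topology

private lemma prim17 (g : ℝ → ℝ) (hg : Continuous g) (c t : ℝ) :
    HasDerivAt (fun u => ∫ s in c..u, g s) (g t) t :=
  (hg.integral_hasStrictDerivAt c t).hasDerivAt

private lemma window17 (g : ℝ → ℝ) (hg : Continuous g) (h t : ℝ) :
    HasDerivAt (fun u => ∫ s in (u - h)..u, g s) (g t - g (t - h)) t := by
  have h1 := prim17 g hg 0 t
  have h2 : HasDerivAt (fun u => ∫ s in (0:ℝ)..(u - h), g s) (g (t - h)) t := by
    have := (prim17 g hg 0 (t - h)).comp t ((hasDerivAt_id t).sub_const h)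
    simpa [Function.comp_def] using this
  have h3 := h1.sub h2
  apply h3.congr_of_eventuallyEq
  filter_upwards with u
  rw [Pi.sub_apply, intervalIntegral.integral_interval_sub_left (hg.intervalIntegrable _ _)
    (hg.intervalIntegrable _ _)]

theorem stmt17 (t0 h lam : ℝ) (hh : 0 < h) (hlam : 0 < lam)
    (a b x ψ : ℝ → ℝ) (ha : Continuous a) (hb : Continuous b)
    -- x is a solution of the delay differential equation with initial function ψ
    (hxc : ContinuousOn x (Set.Ici (t0 - h)))
    (hx : ∀ t, t0 ≤ t → HasDerivWithinAt x (a t * x t + b t * x (t - h)) (Set.Ici t0) t)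
    (hψ : ContinuousOn ψ (Set.Icc (t0 - h) t0))
    (hinit : ∀ t ∈ Set.Icc (t0 - h) t0, x t = ψ t)
    -- the auxiliary functions η and γ
    (η γ : ℝ → ℝ)
    (hη : ∀ t, η t = Real.exp (∫ u in t0..t, a u) /
        (1 + lam * ∫ s in (t - h)..t, Real.exp (∫ u in t0..(s + h), a u)))
    (hγ : ∀ t, γ t = a t + lam * η t)
    -- the condition |b(t)| ≤ λ·η(t)
    (hbη : ∀ t, t0 ≤ t → |b t| ≤ lam * η t) :
    ∀ t, t0 ≤ t →
      |x t| ≤ (|x t0| + lam * η t0 * ∫ s in (t0 - h)..t0, |x s|) *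
        Real.exp (∫ s in t0..t, γ s) := by
  intro t ht
  -- continuous extension of x to all of ℝ
  set y : ℝ → ℝ := fun s => x (max s (t0 - h)) with hy_def
  have hy : Continuous y :=
    hxc.comp_continuous (continuous_id.max continuous_const)
      (fun s => mem_Ici.2 (le_max_right _ _))
  have hyx : ∀ s, t0 - h ≤ s → y s = x s := by
    intro s hs
    simp only [hy_def, max_eq_left hs]
  -- auxiliary functions
  set E : ℝ → ℝ := fun u => Real.exp (∫ v in t0..u, a v) with hE_def
  have hEpos : ∀ u, 0 < E u := fun u => Real.exp_pos _
  have hEd : ∀ u, HasDerivAt E (a u * E u) u := by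
    intro u
    have := (prim17 a ha t0 u).exp
    simpa [hE_def, mul_comm] using this
  have hEc : Continuous E := continuous_iff_continuousAt.2 fun u => (hEd u).continuousAt
  set G : ℝ → ℝ := fun s => Real.exp (∫ v in t0..(s + h), a v) with hG_def
  have hGpos : ∀ s, 0 < G s := fun s => Real.exp_pos _
  have hGc : Continuous G := by
    have : G = fun s => E (s + h) := rfl
    rw [this]; exact hEc.comp (continuous_id.add continuous_const)
  set F : ℝ → ℝ := fun u => ∫ s in (u - h)..u, G s with hF_def
  have hFd : ∀ u, HasDerivAt F (G u - G (u - h)) u := fun u => window17 G hGc h u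
  have hFnonneg : ∀ u, 0 ≤ F u := by
    intro u
    apply intervalIntegral.integral_nonneg (by linarith)
    exact fun s _ => (hGpos s).le
  set N : ℝ → ℝ := fun u => 1 + lam * F u with hN_def
  have hNpos : ∀ u, 0 < N u := by
    intro u
    have := mul_nonneg hlam.le (hFnonneg u)
    simp only [hN_def]; linarith
  have hNd : ∀ u, HasDerivAt N (lam * (G u - G (u - h))) u := by
    intro u
    exact ((hFd u).const_mul lam).const_add 1
  have hηE : ∀ u, η u = E u / N u := hη
  set ηd : ℝ → ℝ :=
    fun u => (a u * E u * N u - E u * (lam * (G u - G (u - h)))) / N u ^ 2 with hηd_def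
  have hηd : ∀ u, HasDerivAt η (ηd u) u := by
    intro u
    have h1 : HasDerivAt (fun w => E w / N w)
        ((a u * E u * N u - E u * (lam * (G u - G (u - h)))) / N u ^ 2) u :=
      (hEd u).div (hNd u) (hNpos u).ne'
    exact h1.congr_of_eventuallyEq (Eventually.of_forall fun w => hηE w)
  have hηc : Continuous η := continuous_iff_continuousAt.2 fun u => (hηd u).continuousAt
  have hηpos : ∀ u, 0 < η u := by
    intro u
    rw [hηE u]
    exact div_pos (hEpos u) (hNpos u)
  have hγc : Continuous γ := by
    have : γ = fun u => a u + lam * η u := funext hγ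
    rw [this]; exact ha.add (continuous_const.mul hηc)
  -- key Riccati inequality: η' ≤ γ η
  have hkey : ∀ u, ηd u ≤ γ u * η u := by
    intro u
    have hGsub : G (u - h) = E u := by
      simp only [hG_def, hE_def, sub_add_cancel]
    have heq : γ u * η u - ηd u = lam * E u * G u / N u ^ 2 := by
      have hηdu : ηd u = (a u * E u * N u - E u * (lam * (G u - G (u - h)))) / N u ^ 2 := rfl
      have halg : ∀ A EE NN GG : ℝ, NN ≠ 0 →
          (A + lam * (EE / NN)) * (EE / NN) - (A * EE * NN - EE * (lam * (GG - EE))) / NN ^ 2 =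
            lam * EE * GG / NN ^ 2 := by
        intro A EE NN GG hNN
        field_simp
        ring
      rw [hγ u, hηE u, hηdu, hGsub]
      exact halg (a u) (E u) (N u) (G u) (hNpos u).ne'
    have hpos : 0 ≤ lam * E u * G u / N u ^ 2 := by positivity
    linarith [heq ▸ hpos]
  -- the sliding integral of |y|
  set I : ℝ → ℝ := fun u => ∫ s in (u - h)..u, |y s| with hI_def
  have hId : ∀ u, HasDerivAt I (|y u| - |y (u - h)|) u := fun u => window17 _ hy.abs h u
  have hIc : Continuous I := continuous_iff_continuousAt.2 fun u => (hId u).continuousAt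
  have hInn : ∀ u, 0 ≤ I u := by
    intro u
    apply intervalIntegral.integral_nonneg (by linarith)
    exact fun s _ => abs_nonneg _
  -- the Lyapunov function V and the exponent Γ
  set V : ℝ → ℝ := fun u => |y u| + lam * η u * I u with hV_def
  have hVc : Continuous V := hy.abs.add ((continuous_const.mul hηc).mul hIc)
  have hyleV : ∀ u, |y u| ≤ V u := by
    intro u
    have : 0 ≤ lam * η u * I u := by
      have := hηpos u
      have := hInn u
      positivity
    simp only [hV_def]; linarith
  set Γ : ℝ → ℝ := fun u => ∫ s in t0..u, γ s with hΓ_def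
  have hΓd : ∀ u, HasDerivAt Γ (γ u) u := fun u => prim17 γ hγc t0 u
  have hΓc : Continuous Γ := continuous_iff_continuousAt.2 fun u => (hΓd u).continuousAt
  -- the Dini-derivative bound function for V
  set D : ℝ → ℝ := fun u =>
    a u * |y u| + |b u| * |y (u - h)| +
      lam * (ηd u * I u + η u * (|y u| - |y (u - h)|)) with hD_def
  set V0 : ℝ → ℝ := fun u => V t0 * Real.exp (Γ u) with hV0_def
  -- choose K bounding γ on [t0, t]
  obtain ⟨K0, hK0⟩ := (isCompact_Icc (a := t0) (b := t)).exists_bound_of_continuousOn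
    hγc.continuousOn
  set K : ℝ := |K0| + 1 with hK_def
  have hKpos : 0 < K := by positivity
  have hKγ : ∀ s ∈ Icc t0 t, γ s < K := by
    intro s hs
    have h1 : γ s ≤ |γ s| := le_abs_self _
    have h2 : |γ s| ≤ K0 := hK0 s hs
    have h3 : K0 ≤ |K0| := le_abs_self _
    simp only [hK_def]; linarith
  -- the ε-fencing estimate
  have main : ∀ ε : ℝ, 0 < ε → ∀ u ∈ Icc t0 t,
      V u ≤ V t0 * Real.exp (Γ u) + ε * Real.exp (K * (u - t0)) := by
    intro ε hε
    set B : ℝ → ℝ := fun u => V t0 * Real.exp (Γ u) + ε * Real.exp (K * (u - t0)) with hB_def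
    set B' : ℝ → ℝ := fun u => γ u * (V t0 * Real.exp (Γ u)) +
      K * (ε * Real.exp (K * (u - t0))) with hB'_def
    have hBd : ∀ u, HasDerivAt B (B' u) u := by
      intro u
      have h1 : HasDerivAt (fun w => V t0 * Real.exp (Γ w)) (V t0 * (Real.exp (Γ u) * γ u)) u :=
        ((hΓd u).exp).const_mul (V t0)
      have h2 : HasDerivAt (fun w => ε * Real.exp (K * (w - t0)))
          (ε * (Real.exp (K * (u - t0)) * K)) u := by
        have h3 : HasDerivAt (fun w => K * (w - t0)) K u := by
          simpa using ((hasDerivAt_id u).sub_const t0).const_mul K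
        exact (h3.exp).const_mul ε
      have := h1.add h2
      convert this using 1
      case e'_9 => simp only [hB'_def]; ring
      all_goals rfl
    -- transfer the derivative of x to y, and slope facts
    have hslope_y : ∀ u, u ∈ Ico t0 t →
        Tendsto (slope y u) (𝓝[>] u) (𝓝 (a u * y u + b u * y (u - h))) := by
      intro u hu
      have hu1 : t0 - h ≤ u := by linarith [hu.1]
      have hu2 : t0 - h ≤ u - h := by linarith [hu.1]
      have heq : ∀ s ∈ Ici t0, y s = x s := fun s hs => hyx s (by linarith [mem_Ici.1 hs])
      have hdy : HasDerivWithinAt y (a u * y u + b u * y (u - h)) (Ici t0) u := by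
        have h1 := (hx u hu.1).congr heq (heq u (mem_Ici.2 hu.1))
        rwa [← hyx u hu1, ← hyx (u - h) hu2] at h1
      have h2 := hasDerivWithinAt_iff_tendsto_slope.1 hdy
      exact h2.mono_left (nhdsWithin_mono u (fun z hz => ⟨le_trans hu.1 (le_of_lt hz), ne_of_gt hz⟩))
    have hslope_φ : ∀ u, Tendsto (slope (fun w => lam * η w * I w) u) (𝓝[>] u)
        (𝓝 (lam * (ηd u * I u + η u * (|y u| - |y (u - h)|)))) := by
      intro u
      have h1 : HasDerivAt (fun w => lam * η w * I w)
          (lam * (ηd u * I u + η u * (|y u| - |y (u - h)|))) u := by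
        have := ((hηd u).mul (hId u)).const_mul lam
        simpa [mul_assoc] using this
      have h2 := hasDerivAt_iff_tendsto_slope.1 h1
      exact h2.mono_left (nhdsWithin_mono u (fun z hz => ne_of_gt hz))
    apply image_le_of_liminf_slope_right_lt_deriv_boundary' (f' := D)
      hVc.continuousOn ?hf' ?hat0 ?hBc ?hBd ?hbound
    case hat0 =>
      simp only [hB_def, hΓ_def, intervalIntegral.integral_same, Real.exp_zero, mul_one, sub_self,
        mul_zero]
      linarith
    case hBc => exact (Continuous.continuousOn (by fun_prop))
    case hBd => exact fun u _ => (hBd u).hasDerivWithinAt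
    case hbound =>
      intro u hu hVB
      have hu' : u ∈ Icc t0 t := Ico_subset_Icc_self hu
      -- D u ≤ γ u * V u
      have key1 : lam * (ηd u * I u) ≤ lam * (γ u * η u * I u) :=
        mul_le_mul_of_nonneg_left (mul_le_mul_of_nonneg_right (hkey u) (hInn u)) hlam.le
      have key2 : |b u| * |y (u - h)| ≤ lam * η u * |y (u - h)| :=
        mul_le_mul_of_nonneg_right (hbη u hu.1) (abs_nonneg _)
      have hDV : D u ≤ γ u * V u := by
        have expand : γ u * V u = a u * |y u| + lam * η u * |y u| +
            lam * (γ u * η u * I u) - (lam * η u * |y (u - h)| - lam * η u * |y (u - h)|) := by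
          simp only [hV_def, hγ u]; ring
        simp only [hD_def]
        rw [expand, hγ u]
        simp only [hγ u] at key1
        nlinarith [key1, key2]
      have hεpos : 0 < ε * Real.exp (K * (u - t0)) := by positivity
      have hγK : γ u < K := hKγ u hu'
      have hlt : γ u * (ε * Real.exp (K * (u - t0))) < K * (ε * Real.exp (K * (u - t0))) :=
        mul_lt_mul_of_pos_right hγK hεpos
      calc D u ≤ γ u * V u := hDV
        _ = γ u * B u := by rw [hVB]
        _ = γ u * (V t0 * Real.exp (Γ u)) + γ u * (ε * Real.exp (K * (u - t0))) := by
            simp only [hB_def]; ring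
        _ < B' u := by simp only [hB'_def]; linarith
    case hf' =>
      intro u hu r hr
      have hu1 : t0 - h ≤ u := by linarith [hu.1]
      -- limit of the slope of |y| from the right
      have hL : ∃ L, L ≤ a u * |y u| + |b u| * |y (u - h)| ∧
          Tendsto (slope (fun w => |y w|) u) (𝓝[>] u) (𝓝 L) := by
        rcases lt_trichotomy (y u) 0 with h0 | h0 | h0
        · refine ⟨-(a u * y u + b u * y (u - h)), ?_, ?_⟩
          · have h1 : -(b u * y (u - h)) ≤ |b u| * |y (u - h)| := by
              rw [← abs_mul]; exact neg_le_abs _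
            have h2 : -(a u * y u) = a u * |y u| := by rw [abs_of_neg h0]; ring
            linarith
          · have hev : ∀ᶠ z in 𝓝[>] u, y z < 0 :=
              ((hy.continuousAt.eventually_lt continuousAt_const h0).filter_mono
                nhdsWithin_le_nhds)
            apply ((hslope_y u hu).neg).congr'
            filter_upwards [hev] with z hz
            rw [slope_def_field, slope_def_field, abs_of_neg hz, abs_of_neg h0]
            ring
        · refine ⟨|a u * y u + b u * y (u - h)|, ?_, ?_⟩
          · calc |a u * y u + b u * y (u - h)| ≤ |a u * y u| + |b u * y (u - h)| := abs_add_le _ _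
              _ = a u * |y u| + |b u| * |y (u - h)| := by
                  rw [h0]; simp [abs_mul]
          · apply ((hslope_y u hu).abs).congr'
            filter_upwards [self_mem_nhdsWithin] with z hz
            rw [slope_def_field, slope_def_field, h0, abs_div,
              abs_of_pos (sub_pos.2 (mem_Ioi.1 hz))]
            simp
        · refine ⟨a u * y u + b u * y (u - h), ?_, ?_⟩
          · have h1 : b u * y (u - h) ≤ |b u| * |y (u - h)| := by
              rw [← abs_mul]; exact le_abs_self _
            have h2 : a u * y u = a u * |y u| := by rw [abs_of_pos h0]
            linarith
          · have hev : ∀ᶠ z in 𝓝[>] u, 0 < y z :=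
              ((continuousAt_const.eventually_lt hy.continuousAt h0).filter_mono
                nhdsWithin_le_nhds)
            apply (hslope_y u hu).congr'
            filter_upwards [hev] with z hz
            rw [slope_def_field, slope_def_field, abs_of_pos hz, abs_of_pos h0]
      obtain ⟨L, hLm, hLt⟩ := hL
      have hVslope : ∀ z, slope V u z =
          slope (fun w => |y w|) u z + slope (fun w => lam * η w * I w) u z := by
        intro z
        simp only [slope_def_field, hV_def]
        ring
      have hsum : Tendsto (slope V u) (𝓝[>] u)
          (𝓝 (L + lam * (ηd u * I u + η u * (|y u| - |y (u - h)|)))) := by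
        have := hLt.add (hslope_φ u)
        exact this.congr fun z => (hVslope z).symm
      have hle : L + lam * (ηd u * I u + η u * (|y u| - |y (u - h)|)) ≤ D u := by
        simp only [hD_def]; linarith
      exact ((hsum.eventually (gt_mem_nhds (lt_of_le_of_lt hle hr))).frequently)
  -- pass to the limit ε → 0
  have hVle : V t ≤ V t0 * Real.exp (Γ t) := by
    apply le_of_forall_pos_le_add
    intro ε hε
    have hc : 0 < Real.exp (K * (t - t0)) := Real.exp_pos _
    have := main (ε / Real.exp (K * (t - t0))) (by positivity) t ⟨ht, le_rfl⟩
    rwa [div_mul_cancel₀ _ hc.ne'] at this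
  -- translate back to x
  have hVt0 : V t0 = |x t0| + lam * η t0 * ∫ s in (t0 - h)..t0, |x s| := by
    have h1 : y t0 = x t0 := hyx t0 (by linarith)
    have h2 : I t0 = ∫ s in (t0 - h)..t0, |x s| := by
      apply intervalIntegral.integral_congr
      intro s hs
      rw [uIcc_of_le (by linarith)] at hs
      show |y s| = |x s|
      rw [hyx s hs.1]
    simp only [hV_def, h1, h2]
  have hxt : |x t| = |y t| := by rw [hyx t (by linarith)]
  calc |x t| = |y t| := hxt
    _ ≤ V t := hyleV t
    _ ≤ V t0 * Real.exp (Γ t) := hVle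
    _ = (|x t0| + lam * η t0 * ∫ s in (t0 - h)..t0, |x s|) * Real.exp (∫ s in t0..t, γ s) := by
        rw [hVt0]
end

section
/- Suppose there exists a constant D > 0 such that h < D and D·b(t+h)² ≤ Q(t) for all t ≥ t₀. Define V(t) := A(t)² − D ∫_{t−h}^{t} b(s+h)² x(s)² ds. Then along any solution x of the delay differential equation, V is differentiable on [t₀,∞) and V′(t) ≥ Q(t)·V(t) for all t ≥ t₀. -/
/-- Cauchy–Schwarz for interval integrals of a continuous function. -/
lemma cs_interval (f : ℝ → ℝ) (hf : Continuous f) (u v : ℝ) (huv : u ≤ v) :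
    (∫ s in u..v, f s) ^ 2 ≤ (v - u) * ∫ s in u..v, (f s) ^ 2 := by
  rcases eq_or_lt_of_le huv with rfl | hlt
  · simp
  set L : ℝ := v - u with hL
  have hL0 : 0 < L := by simp [hL]; linarith
  set I : ℝ := ∫ s in u..v, f s with hI
  set J : ℝ := ∫ s in u..v, (f s) ^ 2 with hJ
  set c : ℝ := I / L with hc
  have hint1 : IntervalIntegrable f MeasureTheory.volume u v := hf.intervalIntegrable _ _
  have hexp : (∫ s in u..v, (f s - c) ^ 2) = J - 2 * c * I + c ^ 2 * L := by
    have h1 : (∫ s in u..v, (f s - c) ^ 2)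
        = ∫ s in u..v, ((f s) ^ 2 - 2 * c * f s + c ^ 2) := by
      apply intervalIntegral.integral_congr
      intro s _; ring
    rw [h1]
    rw [intervalIntegral.integral_add (f := fun s => f s ^ 2 - 2 * c * f s) (g := fun _ => c ^ 2) (((hf.pow 2).sub ((continuous_const.mul hf))).intervalIntegrable _ _)
      (intervalIntegrable_const),
      intervalIntegral.integral_sub (f := fun s => f s ^ 2) (g := fun s => 2 * c * f s) ((hf.pow 2).intervalIntegrable _ _)
      ((continuous_const.mul hf).intervalIntegrable _ _),
      intervalIntegral.integral_const_mul, intervalIntegral.integral_const]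
    simp [hI, hJ, hL]
    ring
  have hnn : 0 ≤ ∫ s in u..v, (f s - c) ^ 2 := by
    apply intervalIntegral.integral_nonneg huv
    intro s _; positivity
  rw [hexp] at hnn
  have hcc : c * L = I := by rw [hc]; exact div_mul_cancel₀ I hL0.ne'
  nlinarith [sq_nonneg c, sq_nonneg (c * L - I)]

theorem stmt18 (t0 h D : ℝ) (hh : 0 < h) (hD : 0 < D) (hhD : h < D)
    (a b x : ℝ → ℝ) (ha : Continuous a) (hb : Continuous b)
    -- x is a solution of the delay differential equation
    (hxc : ContinuousOn x (Set.Ici (t0 - h)))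
    (hx : ∀ t, t0 ≤ t → HasDerivWithinAt x (a t * x t + b t * x (t - h)) (Set.Ici t0) t)
    -- the auxiliary functions Q, A, V
    (Q A V : ℝ → ℝ)
    (hQ : ∀ t, Q t = a t + b (t + h))
    (hA : ∀ t, A t = x t + ∫ s in (t - h)..t, b (s + h) * x s)
    (hV : ∀ t, V t = (A t) ^ 2 - D * ∫ s in (t - h)..t, (b (s + h)) ^ 2 * (x s) ^ 2)
    -- the condition D·b(t+h)² ≤ Q(t)
    (hcond : ∀ t, t0 ≤ t → D * (b (t + h)) ^ 2 ≤ Q t) :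
    ∀ t, t0 ≤ t → ∃ d, HasDerivWithinAt V d (Set.Ici t0) t ∧ Q t * V t ≤ d := by
  -- continuous extension of x to all of ℝ
  set y : ℝ → ℝ := fun t => x (max t (t0 - h)) with hy
  have hyc : Continuous y :=
    hxc.comp_continuous (continuous_id.max continuous_const)
      (fun t => Set.mem_Ici.2 (le_max_right _ _))
  have hyx : ∀ t, t0 - h ≤ t → y t = x t := by
    intro t ht; simp only [hy]; rw [max_eq_left ht]
  set g1 : ℝ → ℝ := fun s => b (s + h) * y s with hg1def
  set g2 : ℝ → ℝ := fun s => (b (s + h)) ^ 2 * (y s) ^ 2 with hg2def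
  have hbc : Continuous fun s : ℝ => b (s + h) := hb.comp (continuous_id.add continuous_const)
  have hg1c : Continuous g1 := hbc.mul hyc
  have hg2c : Continuous g2 := (hbc.pow 2).mul (hyc.pow 2)
  have hg21 : ∀ s, g2 s = (g1 s) ^ 2 := by intro s; simp [hg1def, hg2def]; ring
  set G1 : ℝ → ℝ := fun t => ∫ s in (t0 - h)..t, g1 s with hG1def
  set G2 : ℝ → ℝ := fun t => ∫ s in (t0 - h)..t, g2 s with hG2def
  have hG1 : ∀ t, HasDerivAt G1 (g1 t) t := fun t => (hg1c.integral_hasStrictDerivAt _ t).hasDerivAt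
  have hG2 : ∀ t, HasDerivAt G2 (g2 t) t := fun t => (hg2c.integral_hasStrictDerivAt _ t).hasDerivAt
  -- identification of the integrals
  have hint1 : ∀ u : ℝ, t0 ≤ u →
      (∫ s in (u - h)..u, b (s + h) * x s) = G1 u - G1 (u - h) := by
    intro u hu
    rw [hG1def]
    simp only
    rw [intervalIntegral.integral_interval_sub_left (hg1c.intervalIntegrable _ _)
      (hg1c.intervalIntegrable _ _)]
    apply intervalIntegral.integral_congr
    intro s hs
    rw [Set.uIcc_of_le (by linarith)] at hs
    rw [hg1def]
    simp only
    rw [hyx s (by linarith [hs.1])]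
  have hint2 : ∀ u : ℝ, t0 ≤ u →
      (∫ s in (u - h)..u, (b (s + h)) ^ 2 * (x s) ^ 2) = G2 u - G2 (u - h) := by
    intro u hu
    rw [hG2def]
    simp only
    rw [intervalIntegral.integral_interval_sub_left (hg2c.intervalIntegrable _ _)
      (hg2c.intervalIntegrable _ _)]
    apply intervalIntegral.integral_congr
    intro s hs
    rw [Set.uIcc_of_le (by linarith)] at hs
    rw [hg2def]
    simp only
    rw [hyx s (by linarith [hs.1])]
  -- V agrees with a nice function on [t0, ∞)
  set W : ℝ → ℝ := fun u => (x u + (G1 u - G1 (u - h))) ^ 2 - D * (G2 u - G2 (u - h)) with hW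
  have hVW : ∀ u ∈ Set.Ici t0, V u = W u := by
    intro u hu
    rw [hV, hA, hint1 u hu, hint2 u hu, hW]
  intro t ht
  -- derivative of W within Ici t0 at t
  have hxd := hx t ht
  have hG1t : HasDerivWithinAt G1 (g1 t) (Set.Ici t0) t := (hG1 t).hasDerivWithinAt
  have hG2t : HasDerivWithinAt G2 (g2 t) (Set.Ici t0) t := (hG2 t).hasDerivWithinAt
  have hsub : HasDerivAt (fun u : ℝ => u - h) 1 t := (hasDerivAt_id t).sub_const h
  have hG1th : HasDerivWithinAt (fun u => G1 (u - h)) (g1 (t - h)) (Set.Ici t0) t := by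
    have := (hG1 (t - h)).comp t hsub
    simpa [Function.comp_def] using this.hasDerivWithinAt
  have hG2th : HasDerivWithinAt (fun u => G2 (u - h)) (g2 (t - h)) (Set.Ici t0) t := by
    have := (hG2 (t - h)).comp t hsub
    simpa [Function.comp_def] using this.hasDerivWithinAt
  have hAd : HasDerivWithinAt (fun u => x u + (G1 u - G1 (u - h)))
      ((a t * x t + b t * x (t - h)) + (g1 t - g1 (t - h))) (Set.Ici t0) t :=
    hxd.add (hG1t.sub hG1th)
  have hWd : HasDerivWithinAt W
      (2 * (x t + (G1 t - G1 (t - h))) ^ 1 *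
        ((a t * x t + b t * x (t - h)) + (g1 t - g1 (t - h))) -
        D * (g2 t - g2 (t - h))) (Set.Ici t0) t := by
    exact (hAd.pow 2).sub ((hG2t.sub hG2th).const_mul D)
  have hVd : HasDerivWithinAt V
      (2 * (x t + (G1 t - G1 (t - h))) ^ 1 *
        ((a t * x t + b t * x (t - h)) + (g1 t - g1 (t - h))) -
        D * (g2 t - g2 (t - h))) (Set.Ici t0) t :=
    hWd.congr hVW (hVW t ht)
  refine ⟨_, hVd, ?_⟩
  -- now the inequality
  have htth : t0 - h ≤ t - h := by linarith
  have htt : t0 - h ≤ t := by linarith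
  have hg1t : g1 t = b (t + h) * x t := by rw [hg1def]; simp only; rw [hyx t htt]
  have hg1th : g1 (t - h) = b t * x (t - h) := by
    rw [hg1def]; simp only; rw [hyx (t - h) htth, sub_add_cancel]
  have hg2t : g2 t = (b (t + h)) ^ 2 * (x t) ^ 2 := by rw [hg2def]; simp only; rw [hyx t htt]
  have hg2th : g2 (t - h) = (b t) ^ 2 * (x (t - h)) ^ 2 := by
    rw [hg2def]; simp only; rw [hyx (t - h) htth, sub_add_cancel]
  set I : ℝ := G1 t - G1 (t - h) with hI
  set J : ℝ := G2 t - G2 (t - h) with hJ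
  have hJint : J = ∫ s in (t - h)..t, g2 s := by
    rw [hJ, hG2def]
    simp only
    rw [intervalIntegral.integral_interval_sub_left (hg2c.intervalIntegrable _ _)
      (hg2c.intervalIntegrable _ _)]
  have hIint : I = ∫ s in (t - h)..t, g1 s := by
    rw [hI, hG1def]
    simp only
    rw [intervalIntegral.integral_interval_sub_left (hg1c.intervalIntegrable _ _)
      (hg1c.intervalIntegrable _ _)]
  have hJ0 : 0 ≤ J := by
    rw [hJint]
    apply intervalIntegral.integral_nonneg (by linarith)
    intro s _
    rw [hg2def]; positivity
  have hCS : I ^ 2 ≤ h * J := by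
    rw [hIint, hJint]
    have := cs_interval g1 hg1c (t - h) t (by linarith)
    have heq : (∫ s in (t - h)..t, g2 s) = ∫ s in (t - h)..t, (g1 s) ^ 2 :=
      intervalIntegral.integral_congr (fun s _ => hg21 s)
    rw [heq]
    simpa using this
  have hQ0 : 0 ≤ Q t := le_trans (by positivity) (hcond t ht)
  have hQI : Q t * I ^ 2 ≤ Q t * (D * J) := by
    apply mul_le_mul_of_nonneg_left _ hQ0
    calc I ^ 2 ≤ h * J := hCS
      _ ≤ D * J := by nlinarith
  have h1 : 0 ≤ (Q t - D * (b (t + h)) ^ 2) * (x t) ^ 2 := by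
    have := hcond t ht
    have : 0 ≤ Q t - D * (b (t + h)) ^ 2 := by linarith
    positivity
  have h2 : 0 ≤ D * (b t) ^ 2 * (x (t - h)) ^ 2 := by positivity
  -- rewrite V t
  have hVt : V t = (x t + I) ^ 2 - D * J := by
    rw [hVW t ht, hW]
  rw [hVt, hg1t, hg1th, hg2t, hg2th]
  have hat : a t = Q t - b (t + h) := by rw [hQ]; ring
  rw [hat]
  nlinarith [h1, h2, hQI]
end
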